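/- arXiv:1206.3926 — 4 statements merged into one kernel-verified Lean document; each statement's English description precedes it below -/
import Mathlib

section
/- (Sufficient condition for the weak maximum principle.) Let Ω be a bounded open set in ℝ^N, N ≥ 2, let D = (d_ij), d_ij ∈ L^∞(Ω), with d_ij ≤ 0 a.e. for all i ≠ j, and let C = (1/2)(D + Dᵗ) be the symmetrized matrix. Let Ω' ⊆ Ω be open and suppose the first symmetric eigenvalue is positive: λ_1^s(Ω') := inf{ R(V) : V ∈ C^1_c(Ω';ℝ^m), V ≠ 0 } > 0, where R(V) = (∫_{Ω'} [Σ_i |∇v_i|² + Σ_{i,j} c_ij v_i v_j] dx) / (∫_{Ω'} |V|² dx). Then the maximum principle holds for −Δ + D in Ω': every U ∈ C¹(Ω̄';ℝ^m) with U ≤ 0 on ∂Ω' and −ΔU + DU ≤ 0 weakly in Ω' satisfies U ≤ 0 in Ω'. -/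
open MeasureTheory Real Set
open scoped RealInnerProductSpace ENNReal

noncomputable section

/-- Euclidean space `ℝ^N`. -/
abbrev EuclN (N : ℕ) := EuclideanSpace ℝ (Fin N)

/-- The Laplacian of a scalar function on `ℝ^N`. -/
def lap {N : ℕ} (u : EuclN N → ℝ) (x : EuclN N) : ℝ :=
  ∑ i : Fin N, iteratedFDeriv ℝ 2 u x ![EuclideanSpace.single i 1, EuclideanSpace.single i 1]

/-- Partial derivative `∂f/∂u_j` of `f(r, u)` with respect to the `j`-th `u`-variable. -/
def pd {m : ℕ} (f : ℝ → (Fin m → ℝ) → ℝ) (j : Fin m) (r : ℝ) (s : Fin m → ℝ) : ℝ :=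
  fderiv ℝ (f r) s (Pi.single j 1)

/-- `Ψ ∈ C^1_c(Ω'; ℝ^m)`. -/
def IsTestFun {N m : ℕ} (Ω' : Set (EuclN N)) (Ψ : Fin m → EuclN N → ℝ) : Prop :=
  ∀ i, ContDiff ℝ 1 (Ψ i) ∧ HasCompactSupport (Ψ i) ∧ tsupport (Ψ i) ⊆ Ω'

/-- The quadratic form `Q_U(Ψ; Ω')` of the linearized operator at a solution `U`. -/
def Qform {N m : ℕ} (f : Fin m → ℝ → (Fin m → ℝ) → ℝ) (U : Fin m → EuclN N → ℝ)
    (Ω' : Set (EuclN N)) (Ψ : Fin m → EuclN N → ℝ) : ℝ :=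
  ∫ x in Ω', ((∑ i, ‖gradient (Ψ i) x‖ ^ 2) -
    ∑ i, ∑ j, pd (f i) j ‖x‖ (fun k => U k x) * Ψ i x * Ψ j x)

/-- There is a `k`-dimensional subspace of `C^1_c(Ω'; ℝ^m)` on which `Q_U(·; Ω')`
is negative definite. -/
def NegDefFamily {N m : ℕ} (f : Fin m → ℝ → (Fin m → ℝ) → ℝ) (U : Fin m → EuclN N → ℝ)
    (Ω' : Set (EuclN N)) (k : ℕ) : Prop :=
  ∃ Ψ : Fin k → Fin m → EuclN N → ℝ,
    (∀ l, IsTestFun Ω' (Ψ l)) ∧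
    ∀ c : Fin k → ℝ, c ≠ 0 → Qform f U Ω' (fun i x => ∑ l, c l * Ψ l i x) < 0

/-- The semilinear system is cooperative (weakly coupled) in `Ω'`. -/
def CoopAlong {N m : ℕ} (f : Fin m → ℝ → (Fin m → ℝ) → ℝ) (Ω' : Set (EuclN N)) : Prop :=
  ∀ i j, i ≠ j → ∀ x ∈ Ω', ∀ s : Fin m → ℝ, 0 ≤ pd (f i) j ‖x‖ s

/-- The semilinear system is fully coupled along the solution `U` in `Ω'`. -/
def FullyCoupledAlong {N m : ℕ} (f : Fin m → ℝ → (Fin m → ℝ) → ℝ)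
    (U : Fin m → EuclN N → ℝ) (Ω' : Set (EuclN N)) : Prop :=
  CoopAlong f Ω' ∧
  ∀ I J : Finset (Fin m), I.Nonempty → J.Nonempty → Disjoint I J → I ∪ J = Finset.univ →
    ∃ i₀ ∈ I, ∃ j₀ ∈ J,
      0 < volume {x ∈ Ω' | 0 < pd (f i₀) j₀ ‖x‖ (fun k => U k x)}

/-- `Ω` is an open ball or annulus centered at the origin. -/
def IsBallOrAnnulus {N : ℕ} (Ω : Set (EuclN N)) : Prop :=
  (∃ R : ℝ, 0 < R ∧ Ω = Metric.ball (0 : EuclN N) R) ∨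
  (∃ r R : ℝ, 0 < r ∧ r < R ∧ Ω = {x : EuclN N | r < ‖x‖ ∧ ‖x‖ < R})

/-- The half-domain `Ω(e) = {x ∈ Ω : x·e > 0}`. -/
def halfDom {N : ℕ} (Ω : Set (EuclN N)) (e : EuclN N) : Set (EuclN N) :=
  {x ∈ Ω | 0 < ⟪x, e⟫}

/-- Reflection through the hyperplane `T(e) = {x : x·e = 0}`. -/
def reflPt {N : ℕ} (e x : EuclN N) : EuclN N := x - (2 * ⟪x, e⟫) • e

/-- `U` is foliated Schwarz symmetric on `Ω` with respect to the axis `p`. -/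
def FoliatedSchwarzWith {N m : ℕ} (Ω : Set (EuclN N)) (U : Fin m → EuclN N → ℝ)
    (p : EuclN N) : Prop :=
  ‖p‖ = 1 ∧ ∀ i, ∀ x ∈ Ω, ∀ y ∈ Ω, ‖x‖ = ‖y‖ → ⟪y, p⟫ ≤ ⟪x, p⟫ → U i y ≤ U i x

/-- `U` is foliated Schwarz symmetric on `Ω`. -/
def FoliatedSchwarz {N m : ℕ} (Ω : Set (EuclN N)) (U : Fin m → EuclN N → ℝ) : Prop :=
  ∃ p : EuclN N, FoliatedSchwarzWith Ω U p

/-- `U` is radial on `Ω`. -/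
def IsRadial {N m : ℕ} (Ω : Set (EuclN N)) (U : Fin m → EuclN N → ℝ) : Prop :=
  ∀ i, ∀ x ∈ Ω, ∀ y ∈ Ω, ‖x‖ = ‖y‖ → U i x = U i y

/-- `U` is a classical solution of `-Δu_i = f_i(|x|, U)` in `Ω`, `u_i = 0` on `∂Ω`. -/
def IsSolution {N m : ℕ} (Ω : Set (EuclN N)) (f : Fin m → ℝ → (Fin m → ℝ) → ℝ)
    (U : Fin m → EuclN N → ℝ) : Prop :=
  (∀ i, ∀ x ∈ Ω, -lap (U i) x = f i ‖x‖ (fun k => U k x)) ∧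
  (∀ i, ∀ x ∈ frontier Ω, U i x = 0)

/-- The bilinear form of the linear system `-ΔU + C(x) U`. -/
def BformL {N m : ℕ} (Ω' : Set (EuclN N)) (C : Fin m → Fin m → EuclN N → ℝ)
    (V Φ : Fin m → EuclN N → ℝ) : ℝ :=
  ∫ x in Ω', ((∑ i, ⟪gradient (V i) x, gradient (Φ i) x⟫) +
    ∑ i, ∑ j, C i j x * V i x * Φ j x)

/-- `-ΔU + D U ≥ 0` weakly in `Ω'`. -/
def WeakSuperSol {N m : ℕ} (Ω' : Set (EuclN N)) (D : Fin m → Fin m → EuclN N → ℝ)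
    (U : Fin m → EuclN N → ℝ) : Prop :=
  ∀ Ψ : Fin m → EuclN N → ℝ, IsTestFun Ω' Ψ → (∀ i x, 0 ≤ Ψ i x) →
    0 ≤ BformL Ω' D U Ψ

/-- `-ΔU + D U ≤ 0` weakly in `Ω'`. -/
def WeakSubSol {N m : ℕ} (Ω' : Set (EuclN N)) (D : Fin m → Fin m → EuclN N → ℝ)
    (U : Fin m → EuclN N → ℝ) : Prop :=
  ∀ Ψ : Fin m → EuclN N → ℝ, IsTestFun Ω' Ψ → (∀ i x, 0 ≤ Ψ i x) →
    BformL Ω' D U Ψ ≤ 0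

/-- The linear system with matrix `D` is cooperative in `Ω`: `d_ij ≤ 0` a.e. for `i ≠ j`. -/
def LinCoop {N m : ℕ} (Ω : Set (EuclN N)) (D : Fin m → Fin m → EuclN N → ℝ) : Prop :=
  ∀ i j, i ≠ j → ∀ᵐ x ∂(volume : Measure (EuclN N)), x ∈ Ω → D i j x ≤ 0

/-- The linear system with matrix `D` is fully coupled in `Ω`. -/
def LinFullyCoupled {N m : ℕ} (Ω : Set (EuclN N)) (D : Fin m → Fin m → EuclN N → ℝ) : Prop :=
  LinCoop Ω D ∧
  ∀ I J : Finset (Fin m), I.Nonempty → J.Nonempty → Disjoint I J → I ∪ J = Finset.univ →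
    ∃ i₀ ∈ I, ∃ j₀ ∈ J, 0 < volume {x ∈ Ω | D i₀ j₀ x < 0}

/-- First symmetric eigenvalue on `Ω'`: the infimum of the Rayleigh quotient of the
symmetric matrix `C` over nontrivial test functions. -/
def lamOneSym {N m : ℕ} (Ω' : Set (EuclN N)) (C : Fin m → Fin m → EuclN N → ℝ) : ℝ :=
  sInf {r : ℝ | ∃ Ψ : Fin m → EuclN N → ℝ, IsTestFun Ω' Ψ ∧ (∃ i x, Ψ i x ≠ 0) ∧
    r = BformL Ω' C Ψ Ψ / ∫ x in Ω', ∑ i, (Ψ i x) ^ 2}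

end
noncomputable section

open Filter
open scoped Topology

/-- auxiliary C¹ approximation of the positive part -/
def gfun (τ : ℝ) (s : ℝ) : ℝ := ∫ u in (0:ℝ)..s, Real.smoothTransition ((u - τ)/τ)

namespace gfun

lemma hcont {τ : ℝ} : Continuous (fun u : ℝ => Real.smoothTransition ((u - τ)/τ)) :=
  Real.smoothTransition.continuous.comp (by fun_prop)

lemma hasDerivAt {τ : ℝ} (s : ℝ) :
    HasDerivAt (gfun τ) (Real.smoothTransition ((s - τ)/τ)) s := by
  exact intervalIntegral.integral_hasDerivAt_right
    ((hcont).intervalIntegrable _ _)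
    ((hcont).aestronglyMeasurable.stronglyMeasurableAtFilter)
    hcont.continuousAt

lemma contDiff {τ : ℝ} : ContDiff ℝ 1 (gfun τ) := by
  rw [contDiff_one_iff_deriv]
  refine ⟨fun s => (hasDerivAt s).differentiableAt, ?_⟩
  have : deriv (gfun τ) = fun s => Real.smoothTransition ((s - τ)/τ) := by
    funext s; exact (hasDerivAt s).deriv
  rw [this]; exact hcont

lemma eq_zero {τ s : ℝ} (hτ : 0 < τ) (hs : s ≤ τ) : gfun τ s = 0 := by
  have : EqOn (fun u : ℝ => Real.smoothTransition ((u - τ)/τ)) 0 (Set.uIcc 0 s) := by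
    intro u hu
    have hu' : u ≤ τ := by
      rcases le_total 0 s with h | h
      · have := (Set.uIcc_of_le h ▸ hu).2; linarith
      · have := (Set.uIcc_of_ge h ▸ hu).2; linarith [hτ.le]
    have : Real.smoothTransition ((u - τ)/τ) = 0 :=
      Real.smoothTransition.zero_of_nonpos
        (div_nonpos_of_nonpos_of_nonneg (by linarith) hτ.le)
    simpa using this
  rw [gfun, intervalIntegral.integral_congr this]
  simp

lemma nonneg {τ : ℝ} (hτ : 0 < τ) (s : ℝ) : 0 ≤ gfun τ s := by
  rcases le_total s 0 with h | h
  · rw [eq_zero hτ (h.trans hτ.le)]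
  · exact intervalIntegral.integral_nonneg h (fun u _ => Real.smoothTransition.nonneg _)

lemma le_max {τ : ℝ} (hτ : 0 < τ) (s : ℝ) : gfun τ s ≤ max s 0 := by
  rcases le_total s 0 with h | h
  · rw [eq_zero hτ (h.trans hτ.le)]; exact le_max_right _ _
  · refine le_trans ?_ (le_max_left s 0)
    calc gfun τ s ≤ ∫ u in (0:ℝ)..s, (1:ℝ) :=
          intervalIntegral.integral_mono_on h ((hcont).intervalIntegrable _ _)
            (intervalIntegrable_const) (fun u _ => Real.smoothTransition.le_one _)
      _ = s := by simp

lemma ge {τ : ℝ} (hτ : 0 < τ) (s : ℝ) : s - 2*τ ≤ gfun τ s := by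
  rcases le_total s (2*τ) with h | h
  · have := nonneg hτ s; linarith
  · have hsplit : gfun τ s = gfun τ (2*τ) + ∫ u in (2*τ)..s, Real.smoothTransition ((u - τ)/τ) := by
      rw [gfun, gfun, intervalIntegral.integral_add_adjacent_intervals
        ((hcont).intervalIntegrable _ _) ((hcont).intervalIntegrable _ _)]
    have h2 : (∫ u in (2*τ)..s, Real.smoothTransition ((u - τ)/τ)) = s - 2*τ := by
      have heq : EqOn (fun u : ℝ => Real.smoothTransition ((u - τ)/τ)) (fun _ => (1:ℝ))
          (Set.uIcc (2*τ) s) := by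
        intro u hu
        have : 2*τ ≤ u := by have := (Set.uIcc_of_le h ▸ hu).1; linarith
        exact Real.smoothTransition.one_of_one_le (by rw [le_div_iff₀ hτ]; linarith)
      rw [intervalIntegral.integral_congr heq]; simp
    rw [hsplit, h2]
    have := nonneg hτ (2*τ); linarith

lemma pos_imp {τ s : ℝ} (hτ : 0 < τ) (hs : 0 < gfun τ s) : τ < s := by
  by_contra h; push_neg at h
  rw [eq_zero hτ h] at hs; exact lt_irrefl 0 hs

end gfun

set_option maxHeartbeats 1000000 in
/-- **Sufficient condition for the weak maximum principle:** positivity of the first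
symmetric eigenvalue implies the maximum principle for `-Δ + D` in `Ω'`. -/
theorem statement5
    {N m : ℕ} (hN : 2 ≤ N)
    (Ω : Set (EuclN N)) (hΩo : IsOpen Ω) (hΩb : Bornology.IsBounded Ω)
    (D : Fin m → Fin m → EuclN N → ℝ)
    (hmeas : ∀ i j, Measurable (D i j))
    (hbdd : ∀ i j, ∃ M : ℝ, ∀ x ∈ Ω, |D i j x| ≤ M)
    (hcoop : LinCoop Ω D)
    (Ω' : Set (EuclN N)) (hΩ'o : IsOpen Ω') (hsub : Ω' ⊆ Ω)
    (hlam : 0 < lamOneSym Ω' (fun i j x => (D i j x + D j i x) / 2))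
    (U : Fin m → EuclN N → ℝ)
    (hUreg : ∀ i, ContDiffOn ℝ 1 (U i) (closure Ω'))
    (hbdry : ∀ i, ∀ x ∈ frontier Ω', U i x ≤ 0)
    (hsubsol : WeakSubSol Ω' D U) :
    ∀ i, ∀ x ∈ Ω', U i x ≤ 0 := by
  classical
  by_contra hcon
  push_neg at hcon
  obtain ⟨i0, x0, hx0, hU0⟩ := hcon
  -- prelims
  have hΩ'meas : MeasurableSet Ω' := hΩ'o.measurableSet
  have hΩ'b : Bornology.IsBounded Ω' := hΩb.subset hsub
  have hclcomp : IsCompact (closure Ω') := hΩ'b.isCompact_closure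
  have hvolfin : volume Ω' ≠ ∞ := hΩ'b.measure_lt_top.ne
  set V0 : ℝ := (volume Ω').toReal with hV0def
  have hV0 : 0 ≤ V0 := ENNReal.toReal_nonneg
  have hUc : ∀ i, ContinuousOn (U i) (closure Ω') := fun i => (hUreg i).continuousOn
  -- uniform bound on U
  choose Sc hSc using fun i => hclcomp.exists_bound_of_continuousOn (hUc i)
  set S : ℝ := 1 + ∑ i, |Sc i| with hSdef
  have hS0 : 0 < S := by positivity
  have hSb : ∀ i, ∀ x ∈ closure Ω', |U i x| ≤ S := by
    intro i x hx
    have h1 : |U i x| ≤ Sc i := by simpa using hSc i x hx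
    have h3 : |Sc i| ≤ ∑ j, |Sc j| :=
      Finset.single_le_sum (f := fun j => |Sc j|) (fun j _ => abs_nonneg _) (Finset.mem_univ i)
    have := le_abs_self (Sc i)
    simp only [hSdef]; linarith
  -- uniform bound on D
  choose Mc hMc using hbdd
  set M : ℝ := 1 + ∑ i, ∑ j, |Mc i j| with hMdef
  have hM0 : 0 < M := by positivity
  have hMb : ∀ i j, ∀ x ∈ Ω, |D i j x| ≤ M := by
    intro i j x hx
    have h1 := hMc i j x hx
    have h3 : |Mc i j| ≤ ∑ i', ∑ j', |Mc i' j'| := by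
      calc |Mc i j| ≤ ∑ j', |Mc i j'| :=
            Finset.single_le_sum (f := fun j' => |Mc i j'|) (fun _ _ => abs_nonneg _)
              (Finset.mem_univ j)
        _ ≤ ∑ i', ∑ j', |Mc i' j'| :=
            Finset.single_le_sum (f := fun i' => ∑ j', |Mc i' j'|)
              (fun i' _ => Finset.sum_nonneg fun _ _ => abs_nonneg _) (Finset.mem_univ i)
    have := le_abs_self (Mc i j)
    simp only [hMdef]; linarith
  -- a ball on which U i0 is large
  set a : ℝ := U i0 x0 with hadef
  have ha : 0 < a := hU0
  have hcln : closure Ω' ∈ 𝓝 x0 := Filter.mem_of_superset (hΩ'o.mem_nhds hx0) subset_closure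
  have hca : ContinuousAt (U i0) x0 := (hUc i0).continuousAt hcln
  have hnb : {y | a/2 < U i0 y} ∈ 𝓝 x0 := by
    have : Set.Ioi (a/2) ∈ 𝓝 (U i0 x0) := Ioi_mem_nhds (by rw [← hadef]; linarith)
    exact hca this
  obtain ⟨ρ, hρ0, hball⟩ := Metric.mem_nhds_iff.mp (Filter.inter_mem hnb (hΩ'o.mem_nhds hx0))
  set B : Set (EuclN N) := Metric.ball x0 ρ with hBdef
  have hBsub : B ⊆ Ω' := fun y hy => (hball hy).2
  have hBU : ∀ y ∈ B, a/2 < U i0 y := fun y hy => (hball hy).1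
  have hBvol : 0 < (volume B).toReal :=
    ENNReal.toReal_pos (Metric.measure_ball_pos volume x0 hρ0).ne' measure_ball_lt_top.ne
  set c0 : ℝ := (a/4)^2 * (volume B).toReal with hc0def
  have hc0 : 0 < c0 := by positivity
  set lam : ℝ := lamOneSym Ω' (fun i j x => (D i j x + D j i x) / 2) with hlamdef
  have hlam0 : 0 < lam := hlam
  set Cd : ℝ := (m:ℝ)^2 * (2*M*S) * V0 with hCddef
  have hCd0 : 0 ≤ Cd := by positivity
  -- choice of the parameter τ
  set τ : ℝ := min (a/16) (lam * c0 / (Cd + 1)) with hτdef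
  have hτ0 : 0 < τ := lt_min (by linarith) (by positivity)
  have hτa : τ ≤ a/16 := min_le_left _ _
  have hτC : τ * (Cd + 1) ≤ lam * c0 := by
    have h := min_le_right (a/16) (lam * c0 / (Cd + 1))
    rw [← hτdef] at h
    exact (le_div_iff₀ (by linarith)).mp h
  -- the test function
  set Ψ : Fin m → EuclN N → ℝ := fun i x => if x ∈ Ω' then gfun τ (U i x) else 0 with hΨdef
  have hΨeq : ∀ i, ∀ x ∈ Ω', Ψ i x = gfun τ (U i x) := fun i x hx => if_pos hx
  have hΨnn : ∀ i x, 0 ≤ Ψ i x := by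
    intro i x
    by_cases h : x ∈ Ω'
    · rw [hΨeq i x h]; exact gfun.nonneg hτ0 _
    · simp [hΨdef, h]
  have hΨleS : ∀ i x, Ψ i x ≤ S := by
    intro i x
    by_cases h : x ∈ Ω'
    · rw [hΨeq i x h]
      refine le_trans (gfun.le_max hτ0 _) ?_
      have := hSb i x (subset_closure h)
      rw [abs_le] at this
      exact max_le this.2 hS0.le
    · simp [hΨdef, h]; exact hS0.le
  -- compact sets
  set K : Fin m → Set (EuclN N) := fun i => closure Ω' ∩ U i ⁻¹' (Set.Ici τ) with hKdef
  have hKclosed : ∀ i, IsClosed (K i) := fun i =>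
    (hUc i).preimage_isClosed_of_isClosed isClosed_closure isClosed_Ici
  have hKcomp : ∀ i, IsCompact (K i) := fun i =>
    hclcomp.of_isClosed_subset (hKclosed i) Set.inter_subset_left
  have hKsub : ∀ i, K i ⊆ Ω' := by
    intro i x hx
    by_contra hxn
    have hfr : x ∈ frontier Ω' := by
      rw [hΩ'o.frontier_eq]; exact ⟨hx.1, hxn⟩
    have h1 : U i x ≤ 0 := hbdry i x hfr
    have h2 : τ ≤ U i x := hx.2
    linarith
  have hΨzero : ∀ i x, x ∉ K i → Ψ i x = 0 := by
    intro i x hx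
    by_cases h : x ∈ Ω'
    · rw [hΨeq i x h]
      have : ¬ τ ≤ U i x := fun hc => hx ⟨subset_closure h, hc⟩
      exact gfun.eq_zero hτ0 (by linarith [not_le.mp this])
    · simp [hΨdef, h]
  have hsupp : ∀ i, tsupport (Ψ i) ⊆ K i := by
    intro i
    apply closure_minimal _ (hKclosed i)
    intro x hx
    by_contra hxn
    exact hx (hΨzero i x hxn)
  -- regularity of Ψ
  have hΨc1 : ∀ i, ContDiff ℝ 1 (Ψ i) := by
    intro i
    rw [contDiff_iff_contDiffAt]
    intro x
    by_cases hx : x ∈ Ω'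
    · have hΩnx : Ω' ∈ 𝓝 x := hΩ'o.mem_nhds hx
      have hU : ContDiffAt ℝ 1 (U i) x :=
        (hUreg i).contDiffAt (Filter.mem_of_superset hΩnx subset_closure)
      have hcomp : ContDiffAt ℝ 1 (fun y => gfun τ (U i y)) x :=
        gfun.contDiff.contDiffAt.comp x hU
      apply hcomp.congr_of_eventuallyEq
      filter_upwards [hΩnx] with y hy
      exact hΨeq i y hy
    · have hxK : x ∉ K i := fun hc => hx (hKsub i hc)
      have : Ψ i =ᶠ[𝓝 x] (fun _ => 0) := by
        filter_upwards [(hKclosed i).isOpen_compl.mem_nhds hxK] with y hy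
        exact hΨzero i y hy
      exact contDiffAt_const.congr_of_eventuallyEq this
  have hΨcont : ∀ i, Continuous (Ψ i) := fun i => (hΨc1 i).continuous
  have hΨcs : ∀ i, HasCompactSupport (Ψ i) := fun i =>
    (hKcomp i).of_isClosed_subset (isClosed_tsupport _) (hsupp i)
  have htest : IsTestFun Ω' Ψ := fun i => ⟨hΨc1 i, hΨcs i, (hsupp i).trans (hKsub i)⟩
  -- gradient of Ψ on Ω'
  have hgrad : ∀ i, ∀ x ∈ Ω', gradient (Ψ i) x
      = Real.smoothTransition ((U i x - τ)/τ) • gradient (U i) x := by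
    intro i x hx
    have hΩnx : Ω' ∈ 𝓝 x := hΩ'o.mem_nhds hx
    have hUca : ContDiffAt ℝ 1 (U i) x :=
      (hUreg i).contDiffAt (Filter.mem_of_superset hΩnx subset_closure)
    have hUdiff : DifferentiableAt ℝ (U i) x := hUca.differentiableAt one_ne_zero
    have hgd : HasDerivAt (gfun τ) (Real.smoothTransition ((U i x - τ)/τ)) (U i x) :=
      gfun.hasDerivAt _
    have hcomp : HasFDerivAt (fun y => gfun τ (U i y))
        (Real.smoothTransition ((U i x - τ)/τ) • fderiv ℝ (U i) x) x :=
      hgd.comp_hasFDerivAt x hUdiff.hasFDerivAt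
    have hΨfd : HasFDerivAt (Ψ i)
        (Real.smoothTransition ((U i x - τ)/τ) • fderiv ℝ (U i) x) x := by
      apply hcomp.congr_of_eventuallyEq
      filter_upwards [hΩnx] with y hy
      exact hΨeq i y hy
    show (InnerProductSpace.toDual ℝ _).symm (fderiv ℝ (Ψ i) x)
        = Real.smoothTransition ((U i x - τ)/τ) • (InnerProductSpace.toDual ℝ _).symm (fderiv ℝ (U i) x)
    rw [hΨfd.fderiv]
    exact map_smul _ _ _
  -- continuity of gradients
  have hgradU_cont : ∀ i, ContinuousOn (fun x => gradient (U i) x) Ω' := by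
    intro i
    have h1 : ContDiffOn ℝ 1 (U i) Ω' := (hUreg i).mono subset_closure
    have h2 : ContinuousOn (fderivWithin ℝ (U i) Ω') Ω' :=
      h1.continuousOn_fderivWithin hΩ'o.uniqueDiffOn le_rfl
    have h3 : ContinuousOn (fderiv ℝ (U i)) Ω' :=
      h2.congr fun x hx => (fderivWithin_of_mem_nhds (hΩ'o.mem_nhds hx)).symm
    exact ((InnerProductSpace.toDual ℝ _).symm.continuous).comp_continuousOn h3
  have hgradΨ_cont : ∀ i, Continuous (fun x => gradient (Ψ i) x) := by
    intro i
    have h1 : Continuous (fderiv ℝ (Ψ i)) := (hΨc1 i).continuous_fderiv one_ne_zero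
    exact ((InnerProductSpace.toDual ℝ _).symm.continuous).comp h1
  have hgradΨ_cs : ∀ i, HasCompactSupport (fun x => gradient (Ψ i) x) := by
    intro i
    have h1 : HasCompactSupport (fderiv ℝ (Ψ i)) := (hΨcs i).fderiv (𝕜 := ℝ)
    exact h1.comp_left (map_zero _)
  have hgradΨ_zero : ∀ i, ∀ x ∉ tsupport (Ψ i), gradient (Ψ i) x = 0 := by
    intro i x hx
    have : fderiv ℝ (Ψ i) x = 0 := by
      by_contra hne
      exact hx (support_fderiv_subset ℝ (Function.mem_support.mpr hne))
    show (InnerProductSpace.toDual ℝ _).symm (fderiv ℝ (Ψ i) x) = 0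
    rw [this, map_zero]
  -- integrability facts
  have hint_gradΨΨ : ∀ i, Integrable
      (fun x => (inner ℝ (gradient (Ψ i) x) (gradient (Ψ i) x) : ℝ)) := by
    intro i
    apply Continuous.integrable_of_hasCompactSupport
    · exact (hgradΨ_cont i).inner (hgradΨ_cont i)
    · exact (hgradΨ_cs i).comp₂_left (hgradΨ_cs i) (inner_zero_left _)
  have hint_innerUΨ : ∀ i, IntegrableOn
      (fun x => (inner ℝ (gradient (U i) x) (gradient (Ψ i) x) : ℝ)) Ω' := by
    intro i
    set T : Set (EuclN N) := tsupport (Ψ i) with hTdef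
    have hTsub : T ⊆ Ω' := (hsupp i).trans (hKsub i)
    have hFcont : ContinuousOn (fun x => (inner ℝ (gradient (U i) x) (gradient (Ψ i) x) : ℝ)) Ω' :=
      (hgradU_cont i).inner (hgradΨ_cont i).continuousOn
    have h1 : IntegrableOn (fun x => (inner ℝ (gradient (U i) x) (gradient (Ψ i) x) : ℝ)) T :=
      (hFcont.mono hTsub).integrableOn_compact (hΨcs i)
    have h2 : IntegrableOn (fun x => (inner ℝ (gradient (U i) x) (gradient (Ψ i) x) : ℝ)) (Ω' \ T) :=
      (integrableOn_zero).congr_fun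
        (fun x hx => by simp [hgradΨ_zero i x hx.2])
        (hΩ'meas.diff (isClosed_tsupport _).measurableSet)
    have hcover : Ω' = T ∪ (Ω' \ T) := by
      rw [Set.union_diff_self]
      exact (Set.union_eq_self_of_subset_left hTsub).symm
    rw [hcover]
    exact h1.union h2
  have hUmeas : ∀ i, AEMeasurable (U i) (volume.restrict Ω') :=
    fun i => ((hUc i).mono subset_closure).aemeasurable hΩ'meas
  have hboundedInt : ∀ (F : EuclN N → ℝ), AEStronglyMeasurable F (volume.restrict Ω') →
      (∀ x ∈ Ω', |F x| ≤ M * S * S) → IntegrableOn F Ω' := by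
    intro F hFm hFb
    refine ⟨hFm, ?_⟩
    apply HasFiniteIntegral.restrict_of_bounded (C := M * S * S) hvolfin.lt_top
    rw [ae_restrict_iff' hΩ'meas]
    exact ae_of_all _ fun x hx => by simpa using hFb x hx
  have hint_DUΨ : ∀ i j, IntegrableOn (fun x => D i j x * U i x * Ψ j x) Ω' := by
    intro i j
    apply hboundedInt
    · exact (((hmeas i j).aemeasurable.restrict.mul (hUmeas i)).mul
        (hΨcont j).aemeasurable.restrict).aestronglyMeasurable
    · intro x hx
      have h1 := hMb i j x (hsub hx)
      have h2 := hSb i x (subset_closure hx)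
      have h3 := hΨnn j x
      have h4 := hΨleS j x
      have : |D i j x * U i x * Ψ j x| = |D i j x| * |U i x| * |Ψ j x| := by
        rw [abs_mul, abs_mul]
      rw [this, abs_of_nonneg h3]
      have hM' : (0:ℝ) ≤ M := hM0.le
      have hS' : (0:ℝ) ≤ S := hS0.le
      gcongr
  have hint_DΨΨ : ∀ i j, IntegrableOn (fun x => D i j x * Ψ i x * Ψ j x) Ω' := by
    intro i j
    apply hboundedInt
    · exact (((hmeas i j).aemeasurable.restrict.mul (hΨcont i).aemeasurable.restrict).mul
        (hΨcont j).aemeasurable.restrict).aestronglyMeasurable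
    · intro x hx
      have h1 := hMb i j x (hsub hx)
      have h3 := hΨnn j x
      have h4 := hΨleS j x
      have h5 := hΨnn i x
      have h6 := hΨleS i x
      have : |D i j x * Ψ i x * Ψ j x| = |D i j x| * |Ψ i x| * |Ψ j x| := by
        rw [abs_mul, abs_mul]
      rw [this, abs_of_nonneg h3, abs_of_nonneg h5]
      have hM' : (0:ℝ) ≤ M := hM0.le
      have hS' : (0:ℝ) ≤ S := hS0.le
      gcongr
  -- integrands
  have hF1int : IntegrableOn (fun x =>
      (∑ i, (inner ℝ (gradient (Ψ i) x) (gradient (Ψ i) x) : ℝ)) +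
      ∑ i, ∑ j, D i j x * Ψ i x * Ψ j x) Ω' := by
    apply Integrable.add
    · exact (integrable_finset_sum _ (fun i _ => hint_gradΨΨ i)).integrableOn
    · exact integrable_finset_sum _ (fun i _ =>
        integrable_finset_sum _ (fun j _ => hint_DΨΨ i j))
  have hF2cint : IntegrableOn (fun x =>
      ((∑ i, (inner ℝ (gradient (U i) x) (gradient (Ψ i) x) : ℝ)) +
      ∑ i, ∑ j, D i j x * U i x * Ψ j x) + (m:ℝ)^2 * (2*M*S) * τ) Ω' := by
    apply Integrable.add
    · apply Integrable.add
      · exact integrable_finset_sum _ (fun i _ => hint_innerUΨ i)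
      · exact integrable_finset_sum _ (fun i _ =>
          integrable_finset_sum _ (fun j _ => hint_DUΨ i j))
    · exact (integrableOn_const hvolfin)
  -- pointwise comparison
  have hae : ∀ᵐ x ∂(volume.restrict Ω'),
      (∑ i, (inner ℝ (gradient (Ψ i) x) (gradient (Ψ i) x) : ℝ)) +
        ∑ i, ∑ j, D i j x * Ψ i x * Ψ j x ≤
      ((∑ i, (inner ℝ (gradient (U i) x) (gradient (Ψ i) x) : ℝ)) +
        ∑ i, ∑ j, D i j x * U i x * Ψ j x) + (m:ℝ)^2 * (2*M*S) * τ := by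
    have hd : ∀ᵐ x ∂(volume.restrict Ω'), ∀ (i j : Fin m), i ≠ j → D i j x ≤ 0 := by
      rw [ae_all_iff]
      intro i
      rw [ae_all_iff]
      intro j
      by_cases hij : i = j
      · filter_upwards with x h; exact absurd hij h
      · filter_upwards [ae_restrict_of_ae (hcoop i j hij), ae_restrict_mem hΩ'meas]
          with x h1 h2
        exact fun _ => h1 (hsub h2)
    filter_upwards [hd, ae_restrict_mem hΩ'meas] with x hdx hxΩ'
    have hgradle : ∀ i : Fin m, (inner ℝ (gradient (Ψ i) x) (gradient (Ψ i) x) : ℝ) ≤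
        (inner ℝ (gradient (U i) x) (gradient (Ψ i) x) : ℝ) := by
      intro i
      rw [hgrad i x hxΩ']
      set σ : ℝ := Real.smoothTransition ((U i x - τ)/τ) with hσdef
      have hσ0 : 0 ≤ σ := Real.smoothTransition.nonneg _
      have hσ1 : σ ≤ 1 := Real.smoothTransition.le_one _
      rw [real_inner_smul_right, real_inner_smul_left, real_inner_smul_right]
      have hGG : (0:ℝ) ≤ inner ℝ (gradient (U i) x) (gradient (U i) x) :=
        real_inner_self_nonneg
      nlinarith [mul_nonneg (mul_nonneg hσ0 hGG) (sub_nonneg.mpr hσ1)]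
    have hzero : ∀ i j : Fin m, D i j x * Ψ i x * Ψ j x ≤
        D i j x * U i x * Ψ j x + 2*τ*M*S := by
      intro i j
      have hDM : |D i j x| ≤ M := hMb i j x (hsub hxΩ')
      have hDl : -M ≤ D i j x := (abs_le.mp hDM).1
      have hDr : D i j x ≤ M := (abs_le.mp hDM).2
      have hΨj0 := hΨnn j x
      have hΨjS := hΨleS j x
      have hΨi0 := hΨnn i x
      have hτ' := hτ0.le
      by_cases hij : i = j
      · subst hij
        -- need : D i i x * (Ψ i x - U i x) * Ψ i x ≤ 2τMS with 0 ≤ (U-Ψ)Ψ ≤ 2τΨ ≤ 2τS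
        have hkey : 0 ≤ (U i x - Ψ i x) * Ψ i x ∧ (U i x - Ψ i x) * Ψ i x ≤ 2*τ*S := by
          rcases eq_or_lt_of_le (hΨnn i x) with h0 | h0
          · refine ⟨?_, ?_⟩ <;> rw [← h0] <;> nlinarith [hτ0.le, hS0.le]
          · have hΨx : Ψ i x = gfun τ (U i x) := hΨeq i x hxΩ'
            have hpos : 0 < gfun τ (U i x) := by rw [← hΨx]; exact h0
            have hUτ : τ < U i x := gfun.pos_imp hτ0 hpos
            have hle : Ψ i x ≤ U i x := by
              rw [hΨx]
              exact le_trans (gfun.le_max hτ0 _) (by rw [max_eq_left (by linarith)])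
            have hge : U i x - 2*τ ≤ Ψ i x := by rw [hΨx]; exact gfun.ge hτ0 _
            constructor
            · nlinarith
            · nlinarith [hΨleS i x]
        have ea : (-(D i i x)) * ((U i x - Ψ i x) * Ψ i x) ≤ M * ((U i x - Ψ i x) * Ψ i x) :=
          mul_le_mul_of_nonneg_right (by linarith) hkey.1
        have eb : M * ((U i x - Ψ i x) * Ψ i x) ≤ M * (2*τ*S) :=
          mul_le_mul_of_nonneg_left hkey.2 hM0.le
        nlinarith [ea, eb]
      · have hD0 : D i j x ≤ 0 := hdx i j hij
        have hge : U i x - 2*τ ≤ Ψ i x := by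
          rw [hΨeq i x hxΩ']; exact gfun.ge hτ0 _
        -- D(Ψi - Ui)Ψj ≤ 2τMS
        have h1 : D i j x * Ψ j x ≤ 0 := mul_nonpos_iff.mpr (Or.inr ⟨hD0, hΨj0⟩)
        have e1 : D i j x * Ψ j x * (Ψ i x - U i x) ≤ D i j x * Ψ j x * (-(2*τ)) :=
          mul_le_mul_of_nonpos_left (by linarith) h1
        have e2 : (-(D i j x)) * Ψ j x ≤ M * S :=
          mul_le_mul (by linarith) hΨjS hΨj0 hM0.le
        have e3 : (2*τ) * ((-(D i j x)) * Ψ j x) ≤ (2*τ) * (M * S) :=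
          mul_le_mul_of_nonneg_left e2 (by linarith)
        nlinarith [e1, e3]
    have hsum1 : (∑ i, (inner ℝ (gradient (Ψ i) x) (gradient (Ψ i) x) : ℝ)) ≤
        ∑ i, (inner ℝ (gradient (U i) x) (gradient (Ψ i) x) : ℝ) :=
      Finset.sum_le_sum fun i _ => hgradle i
    have hsum2 : (∑ i, ∑ j, D i j x * Ψ i x * Ψ j x) ≤
        (∑ i, ∑ j, D i j x * U i x * Ψ j x) + (m:ℝ)^2 * (2*M*S) * τ := by
      have : (∑ i, ∑ j, D i j x * Ψ i x * Ψ j x) ≤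
          ∑ i : Fin m, ∑ j : Fin m, (D i j x * U i x * Ψ j x + 2*τ*M*S) :=
        Finset.sum_le_sum fun i _ => Finset.sum_le_sum fun j _ => hzero i j
      have hsplit : ∑ i : Fin m, ∑ j : Fin m, (D i j x * U i x * Ψ j x + 2*τ*M*S)
          = (∑ i, ∑ j, D i j x * U i x * Ψ j x) + (m:ℝ)^2 * (2*M*S) * τ := by
        simp [Finset.sum_add_distrib]
        ring
      linarith [hsplit ▸ this]
    linarith
  -- the three main inequalities
  have hB2 : BformL Ω' D Ψ Ψ ≤ BformL Ω' D U Ψ + ((m:ℝ)^2 * (2*M*S) * τ) * V0 := by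
    have h := setIntegral_mono_ae_restrict hF1int hF2cint hae
    have heq : ∫ x in Ω', (((∑ i, (inner ℝ (gradient (U i) x) (gradient (Ψ i) x) : ℝ)) +
        ∑ i, ∑ j, D i j x * U i x * Ψ j x) + (m:ℝ)^2 * (2*M*S) * τ)
        = BformL Ω' D U Ψ + ((m:ℝ)^2 * (2*M*S) * τ) * V0 := by
      rw [integral_add (by
          apply Integrable.add
          · exact integrable_finset_sum _ (fun i _ => hint_innerUΨ i)
          · exact integrable_finset_sum _ (fun i _ =>
              integrable_finset_sum _ (fun j _ => hint_DUΨ i j)))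
        (show Integrable (fun _ : EuclN N => (m:ℝ)^2 * (2*M*S) * τ) (volume.restrict Ω') from
          integrableOn_const hvolfin)]
      congr 1
      rw [setIntegral_const, smul_eq_mul, mul_comm, measureReal_def]
    calc BformL Ω' D Ψ Ψ ≤ _ := h
      _ = _ := heq
  have hB3 : BformL Ω' D U Ψ ≤ 0 := hsubsol Ψ htest hΨnn
  -- symmetrized form equals the form
  have hsym : BformL Ω' (fun i j x => (D i j x + D j i x) / 2) Ψ Ψ = BformL Ω' D Ψ Ψ := by
    unfold BformL
    apply integral_congr_ae
    apply Filter.EventuallyEq.of_eq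
    funext x
    congr 1
    have hswap : (∑ i, ∑ j, D j i x * Ψ i x * Ψ j x)
        = ∑ i, ∑ j, D i j x * Ψ i x * Ψ j x := by
      rw [Finset.sum_comm]
      exact Finset.sum_congr rfl fun i _ => Finset.sum_congr rfl fun j _ => by ring
    calc (∑ i, ∑ j, (D i j x + D j i x) / 2 * Ψ i x * Ψ j x)
        = (∑ i, ∑ j, (D i j x * Ψ i x * Ψ j x + D j i x * Ψ i x * Ψ j x)) / 2 := by
          rw [Finset.sum_div]
          exact Finset.sum_congr rfl fun i _ => by
            rw [Finset.sum_div]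
            exact Finset.sum_congr rfl fun j _ => by ring
      _ = ((∑ i, ∑ j, D i j x * Ψ i x * Ψ j x) + ∑ i, ∑ j, D j i x * Ψ i x * Ψ j x) / 2 := by
          congr 1
          rw [← Finset.sum_add_distrib]
          exact Finset.sum_congr rfl fun i _ => by rw [← Finset.sum_add_distrib]
      _ = ∑ i, ∑ j, D i j x * Ψ i x * Ψ j x := by rw [hswap]; ring
  -- denominator
  set Q : ℝ := ∫ x in Ω', ∑ i, (Ψ i x)^2 with hQdef
  have hΨsqint : Integrable (fun x => ∑ i, (Ψ i x)^2) := by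
    apply integrable_finset_sum
    intro i _
    apply Continuous.integrable_of_hasCompactSupport
    · exact (hΨcont i).pow 2
    · exact (hΨcs i).comp_left (g := fun t : ℝ => t^2) (by norm_num)
  have hΨB : ∀ x ∈ B, a/4 ≤ Ψ i0 x := by
    intro x hx
    have hxΩ' : x ∈ Ω' := hBsub hx
    rw [hΨeq i0 x hxΩ']
    have h1 := gfun.ge hτ0 (U i0 x)
    have h2 := hBU x hx
    linarith
  have hQlb : c0 ≤ Q := by
    have hstep1 : ∫ x in B, ∑ i, (Ψ i x)^2 ≤ Q :=
      setIntegral_mono_set hΨsqint.integrableOn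
        (ae_of_all _ fun x => Finset.sum_nonneg fun i _ => sq_nonneg _)
        (HasSubset.Subset.eventuallyLE hBsub)
    have hstep2 : ∫ x in B, (a/4)^2 ≤ ∫ x in B, ∑ i, (Ψ i x)^2 := by
      apply setIntegral_mono_on
        (integrableOn_const measure_ball_lt_top.ne)
        hΨsqint.integrableOn measurableSet_ball
      intro x hx
      have h1 : a/4 ≤ Ψ i0 x := hΨB x hx
      have h2 : (a/4)^2 ≤ (Ψ i0 x)^2 := by nlinarith
      refine le_trans h2 ?_
      exact Finset.single_le_sum (f := fun i => (Ψ i x)^2) (fun i _ => sq_nonneg _)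
        (Finset.mem_univ i0)
    have hstep3 : ∫ x in B, ((a/4)^2 : ℝ) = c0 := by
      rw [setIntegral_const, smul_eq_mul, mul_comm, hc0def, measureReal_def]
    linarith
  have hQpos : 0 < Q := lt_of_lt_of_le hc0 hQlb
  -- nontriviality
  have hne : ∃ i x, Ψ i x ≠ 0 := by
    refine ⟨i0, x0, ?_⟩
    have hx0B : x0 ∈ B := Metric.mem_ball_self hρ0
    have := hΨB x0 hx0B
    intro h; rw [h] at this; linarith
  -- lamOneSym ≤ Rayleigh quotient of Ψ
  have hmem : (BformL Ω' (fun i j x => (D i j x + D j i x) / 2) Ψ Ψ / Q) ∈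
      {r : ℝ | ∃ Ψ' : Fin m → EuclN N → ℝ, IsTestFun Ω' Ψ' ∧ (∃ i x, Ψ' i x ≠ 0) ∧
        r = BformL Ω' (fun i j x => (D i j x + D j i x) / 2) Ψ' Ψ' /
          ∫ x in Ω', ∑ i, (Ψ' i x) ^ 2} := ⟨Ψ, htest, hne, rfl⟩
  have hbb : BddBelow {r : ℝ | ∃ Ψ' : Fin m → EuclN N → ℝ, IsTestFun Ω' Ψ' ∧
      (∃ i x, Ψ' i x ≠ 0) ∧
      r = BformL Ω' (fun i j x => (D i j x + D j i x) / 2) Ψ' Ψ' /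
        ∫ x in Ω', ∑ i, (Ψ' i x) ^ 2} := by
    by_contra hnb
    have : lam = 0 := by
      rw [hlamdef]
      unfold lamOneSym
      exact Real.sInf_of_not_bddBelow hnb
    linarith
  have hle : lam ≤ BformL Ω' (fun i j x => (D i j x + D j i x) / 2) Ψ Ψ / Q := by
    rw [hlamdef]
    unfold lamOneSym
    exact csInf_le hbb hmem
  have hlamQ : lam * Q ≤ BformL Ω' D Ψ Ψ := by
    rw [← hsym]
    exact (le_div_iff₀ hQpos).mp hle
  -- contradiction
  have hchain : lam * c0 ≤ ((m:ℝ)^2 * (2*M*S) * τ) * V0 := by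
    have h1 : lam * c0 ≤ lam * Q := by
      apply mul_le_mul_of_nonneg_left hQlb hlam0.le
    linarith
  have hfinal : ((m:ℝ)^2 * (2*M*S) * τ) * V0 = τ * Cd := by rw [hCddef]; ring
  rw [hfinal] at hchain
  nlinarith
end
end

section
/- Let Ω be a bounded open set in ℝ^N, N ≥ 2, and D = (d_ij) with d_ij ∈ L^∞(Ω), d_ij ≤ 0 a.e. for all i ≠ j. If the matrix D(x) is nonnegative definite for a.e. x in an open set Ω' ⊆ Ω (i.e. Σ_{i,j} d_ij(x) ξ_i ξ_j ≥ 0 for all ξ ∈ ℝ^m), then the maximum principle holds for −Δ + D in Ω': every U ∈ C¹(Ω̄';ℝ^m) with U ≤ 0 on ∂Ω' and −ΔU + DU ≤ 0 weakly in Ω' satisfies U ≤ 0 in Ω'. -/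
open MeasureTheory Real Set
open scoped RealInnerProductSpace ENNReal

section MyAux
open intervalIntegral
noncomputable def hramp (δ t : ℝ) : ℝ := min 1 (max 0 ((t - 2*δ)/δ))

lemma hramp_cont (δ : ℝ) : Continuous (hramp δ) := by
  unfold hramp; fun_prop

lemma hramp_nonneg (δ t : ℝ) (hδ : 0 < δ) : 0 ≤ hramp δ t :=
  le_min zero_le_one (le_max_left _ _)

lemma hramp_le_one (δ t : ℝ) : hramp δ t ≤ 1 := min_le_left _ _

lemma hramp_eq_zero {δ t : ℝ} (hδ : 0 < δ) (h : t ≤ 2*δ) : hramp δ t = 0 := by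
  have : (t - 2*δ)/δ ≤ 0 := div_nonpos_of_nonpos_of_nonneg (by linarith) hδ.le
  simp [hramp, max_eq_left this]

lemma hramp_eq_one {δ t : ℝ} (hδ : 0 < δ) (h : 3*δ ≤ t) : hramp δ t = 1 := by
  have h1 : (1:ℝ) ≤ (t - 2*δ)/δ := (le_div_iff₀ hδ).2 (by linarith)
  have : max 0 ((t - 2*δ)/δ) = (t-2*δ)/δ := max_eq_right (le_trans zero_le_one h1)
  simp [hramp, this, min_eq_left h1]

lemma Gcut_hasDerivAt (δ t : ℝ) :
    HasDerivAt (fun u => ∫ s in (0:ℝ)..u, hramp δ s) (hramp δ t) t :=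
  ((hramp_cont δ).integral_hasStrictDerivAt 0 t).hasDerivAt

noncomputable def Gcut (δ t : ℝ) : ℝ := ∫ s in (0:ℝ)..t, hramp δ s

lemma Gcut_deriv (δ : ℝ) : deriv (Gcut δ) = hramp δ :=
  funext fun t => (Gcut_hasDerivAt δ t).deriv

lemma Gcut_contDiff (δ : ℝ) : ContDiff ℝ 1 (Gcut δ) := by
  rw [contDiff_one_iff_deriv]
  exact ⟨fun t => (Gcut_hasDerivAt δ t).differentiableAt, (Gcut_deriv δ) ▸ hramp_cont δ⟩

lemma Gcut_eq_zero {δ t : ℝ} (hδ : 0 < δ) (h : t ≤ 2*δ) : Gcut δ t = 0 := by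
  unfold Gcut
  rcases le_total 0 t with h0 | h0
  · rw [integral_congr (g := fun _ => (0:ℝ)) ?_, intervalIntegral.integral_zero]
    intro s hs
    rw [uIcc_of_le h0] at hs
    exact hramp_eq_zero hδ (le_trans hs.2 h)
  · rw [integral_congr (g := fun _ => (0:ℝ)) ?_, intervalIntegral.integral_zero]
    intro s hs
    rw [uIcc_of_ge h0] at hs
    exact hramp_eq_zero hδ (by nlinarith [hs.2])

lemma Gcut_nonneg {δ : ℝ} (hδ : 0 < δ) (t : ℝ) : 0 ≤ Gcut δ t := by
  rcases le_total t (2*δ) with h | h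
  · rw [Gcut_eq_zero hδ h]
  · have h0 : (0:ℝ) ≤ t := by linarith
    exact integral_nonneg h0 (fun s _ => hramp_nonneg δ s hδ)

lemma Gcut_le_max {δ : ℝ} (hδ : 0 < δ) (t : ℝ) : Gcut δ t ≤ max t 0 := by
  rcases le_total t 0 with h | h
  · rw [Gcut_eq_zero hδ (by linarith)]; exact le_max_right _ _
  · refine le_trans ?_ (le_max_left _ _)
    calc Gcut δ t ≤ ∫ s in (0:ℝ)..t, (1:ℝ) := by
          apply integral_mono_on h ((hramp_cont δ).intervalIntegrable 0 t)
            intervalIntegrable_const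
          exact fun s _ => hramp_le_one δ s
      _ = t := by simp

lemma Gcut_ge {δ : ℝ} (hδ : 0 < δ) (t : ℝ) : t - 3*δ ≤ Gcut δ t := by
  rcases le_total t (3*δ) with h | h
  · have := Gcut_nonneg hδ t; linarith
  · have h3 : (0:ℝ) ≤ 3*δ := by linarith
    have key : Gcut δ t = Gcut δ (3*δ) + ∫ s in (3*δ)..t, hramp δ s := by
      unfold Gcut
      rw [integral_add_adjacent_intervals ((hramp_cont δ).intervalIntegrable _ _)
        ((hramp_cont δ).intervalIntegrable _ _)]
    have h2 : ∫ s in (3*δ)..t, hramp δ s = ∫ s in (3*δ)..t, (1:ℝ) := by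
      apply integral_congr
      intro s hs
      rw [uIcc_of_le h] at hs
      exact hramp_eq_one hδ hs.1
    have := Gcut_nonneg hδ (3*δ)
    rw [key, h2]; simp; linarith

lemma Gcut_pos_lt {δ t : ℝ} (hδ : 0 < δ) (h : Gcut δ t ≠ 0) : 2*δ < t := by
  by_contra hc
  exact h (Gcut_eq_zero hδ (not_lt.1 hc))

section helpers
variable {N : ℕ}

lemma aux_integrableOn {Ω' : Set (EuclN N)} (hΩ'o : IsOpen Ω')
    (hfin : volume Ω' ≠ ⊤) {f : EuclN N → ℝ} (hf : ContinuousOn f Ω')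
    {K : Set (EuclN N)} (hK : IsCompact K) (hKsub : K ⊆ Ω')
    (hz : ∀ x ∈ Ω', x ∉ K → f x = 0) : IntegrableOn f Ω' volume := by
  obtain ⟨b, hb⟩ := hK.exists_bound_of_continuousOn (hf.mono hKsub)
  refine ⟨hf.aestronglyMeasurable hΩ'o.measurableSet, ?_⟩
  apply MeasureTheory.HasFiniteIntegral.restrict_of_bounded (C := max b 0) hfin.lt_top
  refine (ae_restrict_mem hΩ'o.measurableSet).mono fun x hx => ?_
  by_cases hK' : x ∈ K
  · exact le_trans (hb x hK') (le_max_left _ _)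
  · rw [hz x hx hK']; simp

lemma aux_integrableOn_bdd {Ω' : Set (EuclN N)} (hΩ'm : MeasurableSet Ω')
    (hfin : volume Ω' ≠ ⊤) {f : EuclN N → ℝ}
    (hf : AEStronglyMeasurable f (volume.restrict Ω')) {b : ℝ}
    (hb : ∀ x ∈ Ω', |f x| ≤ b) : IntegrableOn f Ω' volume :=
  ⟨hf, MeasureTheory.HasFiniteIntegral.restrict_of_bounded (C := b) hfin.lt_top
    ((ae_restrict_mem hΩ'm).mono fun x hx => hb x hx)⟩

end helpers

end MyAux

set_option maxHeartbeats 2000000 in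
/-- **Maximum principle under a.e. nonnegative definiteness of the matrix `D`.** -/
theorem statement6
    {N m : ℕ} (hN : 2 ≤ N)
    (Ω : Set (EuclN N)) (hΩo : IsOpen Ω) (hΩb : Bornology.IsBounded Ω)
    (D : Fin m → Fin m → EuclN N → ℝ)
    (hmeas : ∀ i j, Measurable (D i j))
    (hbdd : ∀ i j, ∃ M : ℝ, ∀ x ∈ Ω, |D i j x| ≤ M)
    (hcoop : LinCoop Ω D)
    (Ω' : Set (EuclN N)) (hΩ'o : IsOpen Ω') (hsub : Ω' ⊆ Ω)
    (hdef : ∀ᵐ x ∂(volume : Measure (EuclN N)), x ∈ Ω' →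
      ∀ ξ : Fin m → ℝ, 0 ≤ ∑ i, ∑ j, D i j x * ξ i * ξ j)
    (U : Fin m → EuclN N → ℝ)
    (hUreg : ∀ i, ContDiffOn ℝ 1 (U i) (closure Ω'))
    (hbdry : ∀ i, ∀ x ∈ frontier Ω', U i x ≤ 0)
    (hsubsol : WeakSubSol Ω' D U) :
    ∀ i, ∀ x ∈ Ω', U i x ≤ 0 := by
  classical
  intro i x₀ hx₀
  by_contra hposc
  push_neg at hposc
  have hΩ'm : MeasurableSet Ω' := hΩ'o.measurableSet
  have hΩ'b : Bornology.IsBounded Ω' := hΩb.subset hsub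
  have hfin : volume Ω' ≠ ⊤ := hΩ'b.measure_lt_top.ne
  have hA : IsCompact (closure Ω') := hΩ'b.isCompact_closure
  have hUc : ∀ j, ContinuousOn (U j) (closure Ω') := fun j => (hUreg j).continuousOn
  have hUd : ∀ j, ∀ x ∈ Ω', DifferentiableAt ℝ (U j) x := by
    intro j x hx
    exact ((hUreg j).contDiffAt
      (Filter.mem_of_superset (hΩ'o.mem_nhds hx) subset_closure)).differentiableAt one_ne_zero
  have hgradc : ∀ j, ContinuousOn (fun x => gradient (U j) x) Ω' := by
    intro j
    have h1 : ContinuousOn (fderiv ℝ (U j)) Ω' :=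
      ((hUreg j).mono subset_closure).continuousOn_fderiv_of_isOpen hΩ'o le_rfl
    exact (InnerProductSpace.toDual ℝ (EuclN N)).symm.continuous.comp_continuousOn h1
  -- bounds
  choose Cb hCb using fun j => hA.exists_bound_of_continuousOn (hUc j)
  set B : ℝ := ∑ j, max (Cb j) 0 with hBdef
  have hB0 : 0 ≤ B := Finset.sum_nonneg fun j _ => le_max_right _ _
  have hB : ∀ j, ∀ x ∈ closure Ω', |U j x| ≤ B := by
    intro j x hx
    calc |U j x| ≤ Cb j := hCb j x hx
      _ ≤ max (Cb j) 0 := le_max_left _ _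
      _ ≤ B := Finset.single_le_sum (fun k _ => le_max_right (Cb k) 0) (Finset.mem_univ j)
  choose Mb hMb using hbdd
  set M : ℝ := ∑ p : Fin m × Fin m, max (Mb p.1 p.2) 0 with hMdef
  have hM0 : 0 ≤ M := Finset.sum_nonneg fun p _ => le_max_right _ _
  have hM : ∀ i' j, ∀ x ∈ Ω, |D i' j x| ≤ M := by
    intro i' j x hx
    calc |D i' j x| ≤ Mb i' j := hMb i' j x hx
      _ ≤ max (Mb i' j) 0 := le_max_left _ _
      _ ≤ M := Finset.single_le_sum (f := fun p : Fin m × Fin m => max (Mb p.1 p.2) 0)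
          (fun k _ => le_max_right _ 0) (Finset.mem_univ (i', j))
  set C : ℝ := 3 * M * B * (m : ℝ)^2 * (volume Ω').toReal with hCdef
  have hC0 : 0 ≤ C := by
    have := ENNReal.toReal_nonneg (a := volume Ω')
    positivity
  -- a.e. facts
  have hae : ∀ᵐ x ∂(volume : Measure (EuclN N)), x ∈ Ω' →
      ((∀ ξ : Fin m → ℝ, 0 ≤ ∑ i', ∑ j, D i' j x * ξ i' * ξ j) ∧
       ∀ i' j : Fin m, i' ≠ j → D i' j x ≤ 0) := by
    have h2 : ∀ᵐ x ∂(volume : Measure (EuclN N)),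
        ∀ p : Fin m × Fin m, p.1 ≠ p.2 → x ∈ Ω' → D p.1 p.2 x ≤ 0 := by
      rw [MeasureTheory.ae_all_iff]
      intro p
      by_cases hp : p.1 = p.2
      · exact Filter.Eventually.of_forall fun x hne => absurd hp hne
      · exact (hcoop p.1 p.2 hp).mono fun x hx _ hx' => hx (hsub hx')
    filter_upwards [hdef, h2] with x h1 h2' hx
    exact ⟨h1 hx, fun i' j hne => h2' (i', j) hne hx⟩
  -- KEY ESTIMATE
  have key : ∀ δ : ℝ, 0 < δ →
      IntegrableOn (fun x => ∑ j, hramp δ (U j x) * ‖gradient (U j) x‖^2) Ω' volume ∧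
      ∫ x in Ω', ∑ j, hramp δ (U j x) * ‖gradient (U j) x‖^2 ≤ δ * C := by
    intro δ hδ
    set Ψ : Fin m → EuclN N → ℝ := fun j x => if x ∈ Ω' then Gcut δ (U j x) else 0 with hΨdef
    set S : Fin m → Set (EuclN N) :=
      fun j => closure Ω' ∩ U j ⁻¹' (Ici (2*δ)) with hSdef
    have hSclosed : ∀ j, IsClosed (S j) := fun j =>
      (hUc j).preimage_isClosed_of_isClosed isClosed_closure isClosed_Ici
    have hScomp : ∀ j, IsCompact (S j) := fun j =>
      hA.of_isClosed_subset (hSclosed j) inter_subset_left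
    have hSsub : ∀ j, S j ⊆ Ω' := by
      intro j x hxS
      by_contra hxn
      have hxf : x ∈ frontier Ω' := hΩ'o.frontier_eq ▸ ⟨hxS.1, hxn⟩
      have h1 := hbdry j x hxf
      have h2 : 2*δ ≤ U j x := hxS.2
      linarith
    have hΨeq : ∀ j, ∀ x ∈ Ω', Ψ j x = Gcut δ (U j x) := fun j x hx => by
      simp only [hΨdef]; exact if_pos hx
    have hsuppΨ : ∀ j, Function.support (Ψ j) ⊆ S j := by
      intro j x hx
      rw [Function.mem_support] at hx
      by_cases hxΩ : x ∈ Ω'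
      · rw [hΨeq j x hxΩ] at hx
        exact ⟨subset_closure hxΩ, (Gcut_pos_lt hδ hx).le⟩
      · refine absurd ?_ hx
        simp only [hΨdef]; exact if_neg hxΩ
    have htsuppΨ : ∀ j, tsupport (Ψ j) ⊆ S j := fun j =>
      closure_minimal (hsuppΨ j) (hSclosed j)
    have hΨc1 : ∀ j, ContDiff ℝ 1 (Ψ j) := by
      intro j
      rw [contDiff_iff_contDiffAt]
      intro x
      by_cases hxΩ : x ∈ Ω'
      · have h1 : ContDiffAt ℝ 1 (Gcut δ ∘ U j) x :=
          (Gcut_contDiff δ).contDiffAt.comp x ((hUreg j).contDiffAt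
            (Filter.mem_of_superset (hΩ'o.mem_nhds hxΩ) subset_closure))
        exact h1.congr_of_eventuallyEq
          (Filter.eventuallyEq_of_mem (hΩ'o.mem_nhds hxΩ) (fun y hy => by
            simp only [hΨdef]; exact if_pos hy))
      · have hxS : x ∉ S j := fun hc => hxΩ (hSsub j hc)
        have hev : Ψ j =ᶠ[nhds x] (fun _ => 0) := by
          filter_upwards [(hSclosed j).isOpen_compl.mem_nhds hxS] with y hy
          by_cases hyΩ : y ∈ Ω'
          · have hlt : ¬ (2*δ ≤ U j y) := fun hc => hy ⟨subset_closure hyΩ, hc⟩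
            rw [hΨeq j y hyΩ, Gcut_eq_zero hδ (not_le.1 hlt).le]
          · simp only [hΨdef]; exact if_neg hyΩ
        exact contDiffAt_const.congr_of_eventuallyEq hev
    have htest : IsTestFun Ω' Ψ := fun j =>
      ⟨hΨc1 j, IsCompact.of_isClosed_subset (hScomp j) (isClosed_tsupport _) (htsuppΨ j),
        (htsuppΨ j).trans (hSsub j)⟩
    have hΨnn : ∀ j x, 0 ≤ Ψ j x := by
      intro j x
      simp only [hΨdef]
      split_ifs
      · exact Gcut_nonneg hδ _
      · exact le_refl 0
    have hBform := hsubsol Ψ htest hΨnn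
    -- gradient identity
    have hgradΨ : ∀ j, ∀ x ∈ Ω',
        gradient (Ψ j) x = hramp δ (U j x) • gradient (U j) x := by
      intro j x hx
      have hev : Ψ j =ᶠ[nhds x] (Gcut δ ∘ U j) :=
        Filter.eventuallyEq_of_mem (hΩ'o.mem_nhds hx) (fun y hy => by
          simp only [hΨdef]; exact if_pos hy)
      have hfd : HasFDerivAt (Gcut δ ∘ U j)
          (hramp δ (U j x) • fderiv ℝ (U j) x) x :=
        (Gcut_hasDerivAt δ (U j x)).comp_hasFDerivAt x (hUd j x hx).hasFDerivAt
      have hfe : fderiv ℝ (Ψ j) x = hramp δ (U j x) • fderiv ℝ (U j) x := by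
        rw [hev.fderiv_eq]; exact hfd.fderiv
      show (InnerProductSpace.toDual ℝ (EuclN N)).symm _ = _
      rw [hfe, LinearIsometryEquiv.map_smul]
      rfl
    have hinner : ∀ j, ∀ x ∈ Ω',
        ⟪gradient (U j) x, gradient (Ψ j) x⟫ = hramp δ (U j x) * ‖gradient (U j) x‖^2 := by
      intro j x hx
      rw [hgradΨ j x hx, real_inner_smul_right, real_inner_self_eq_norm_sq]
    -- integrabilities
    have hgcont : ContinuousOn (fun x => ∑ j, hramp δ (U j x) * ‖gradient (U j) x‖^2) Ω' := by
      apply continuousOn_finset_sum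
      intro j _
      exact ((hramp_cont δ).comp_continuousOn ((hUc j).mono subset_closure)).mul
        (((hgradc j).norm).pow 2)
    have hgK : ∀ x ∈ Ω', x ∉ (⋃ j, S j) →
        ∑ j, hramp δ (U j x) * ‖gradient (U j) x‖^2 = 0 := by
      intro x hx hxK
      apply Finset.sum_eq_zero
      intro j _
      have hxs : x ∉ S j := fun hc => hxK (mem_iUnion.2 ⟨j, hc⟩)
      have hlt : ¬ (2*δ ≤ U j x) := fun hc => hxs ⟨subset_closure hx, hc⟩
      rw [hramp_eq_zero hδ (not_le.1 hlt).le, zero_mul]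
    have hgint : IntegrableOn (fun x => ∑ j, hramp δ (U j x) * ‖gradient (U j) x‖^2) Ω' volume :=
      aux_integrableOn hΩ'o hfin hgcont (isCompact_iUnion hScomp) (iUnion_subset hSsub) hgK
    have hgradΨcont : ∀ j, Continuous (fun x => gradient (Ψ j) x) := by
      intro j
      have h1 := (contDiff_one_iff_fderiv.1 (hΨc1 j)).2
      exact (InnerProductSpace.toDual ℝ (EuclN N)).symm.continuous.comp h1
    have hF1int : IntegrableOn
        (fun x => ∑ j, ⟪gradient (U j) x, gradient (Ψ j) x⟫) Ω' volume := by
      apply aux_integrableOn hΩ'o hfin ?_ (isCompact_iUnion hScomp) (iUnion_subset hSsub)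
      · intro x hx hxK
        apply Finset.sum_eq_zero
        intro j _
        have hxS : x ∉ S j := fun hc => hxK (mem_iUnion.2 ⟨j, hc⟩)
        have hxts : x ∉ tsupport (Ψ j) := fun hc => hxS (htsuppΨ j hc)
        have hfz : fderiv ℝ (Ψ j) x = 0 :=
          Function.notMem_support.mp (fun hc => hxts (support_fderiv_subset ℝ hc))
        have : gradient (Ψ j) x = 0 := by simp [gradient, hfz]
        rw [this, inner_zero_right]
      · apply continuousOn_finset_sum
        intro j _
        exact (hgradc j).inner (hgradΨcont j).continuousOn
    have hUmeas : ∀ j, AEStronglyMeasurable (U j) (volume.restrict Ω') := fun j =>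
      ((hUc j).mono subset_closure).aestronglyMeasurable hΩ'm
    have hF2int : IntegrableOn
        (fun x => ∑ i', ∑ j, D i' j x * U i' x * Ψ j x) Ω' volume := by
      apply MeasureTheory.integrable_finset_sum
      intro i' _
      apply MeasureTheory.integrable_finset_sum
      intro j _
      apply aux_integrableOn_bdd hΩ'm hfin (b := M * B * B)
      · exact ((hmeas i' j).aestronglyMeasurable.restrict.mul (hUmeas i')).mul
          ((hΨc1 j).continuous.aestronglyMeasurable.restrict)
      · intro x hx
        have h1 : |D i' j x| ≤ M := hM i' j x (hsub hx)
        have h2 : |U i' x| ≤ B := hB i' x (subset_closure hx)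
        have h3 : |Ψ j x| ≤ B := by
          rw [hΨeq j x hx, abs_of_nonneg (Gcut_nonneg hδ _)]
          calc Gcut δ (U j x) ≤ max (U j x) 0 := Gcut_le_max hδ _
            _ ≤ B := max_le (le_trans (le_abs_self _) (hB j x (subset_closure hx))) hB0
        calc |D i' j x * U i' x * Ψ j x| = |D i' j x| * |U i' x| * |Ψ j x| := by
              rw [abs_mul, abs_mul]
          _ ≤ M * B * B := by
              exact mul_le_mul (mul_le_mul h1 h2 (abs_nonneg _) hM0) h3
                (abs_nonneg _) (mul_nonneg hM0 hB0)
    have hFeq : BformL Ω' D U Ψ = ∫ x in Ω',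
        ((∑ j, ⟪gradient (U j) x, gradient (Ψ j) x⟫) +
          ∑ i', ∑ j, D i' j x * U i' x * Ψ j x) := by simp only [BformL]
    have hFint : IntegrableOn (fun x =>
        (∑ j, ⟪gradient (U j) x, gradient (Ψ j) x⟫) +
          ∑ i', ∑ j, D i' j x * U i' x * Ψ j x) Ω' volume := hF1int.add hF2int
    -- pointwise a.e. bound
    have hptwise : ∀ᵐ x ∂(volume.restrict Ω'),
        ∑ j, hramp δ (U j x) * ‖gradient (U j) x‖^2 ≤
        ((∑ j, ⟪gradient (U j) x, gradient (Ψ j) x⟫) +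
          ∑ i', ∑ j, D i' j x * U i' x * Ψ j x) + δ * (3*M*B*(m:ℝ)^2) := by
      refine ((ae_restrict_of_ae hae).and (ae_restrict_mem hΩ'm)).mono ?_
      rintro x ⟨hx1, hx2⟩
      obtain ⟨hq, hco⟩ := hx1 hx2
      have hF1g : ∑ j, ⟪gradient (U j) x, gradient (Ψ j) x⟫
          = ∑ j, hramp δ (U j x) * ‖gradient (U j) x‖^2 :=
        Finset.sum_congr rfl fun j _ => hinner j x hx2
      have hdiag : ∀ j, 0 ≤ D j j x := by
        intro j
        have hqq := hq (Pi.single j 1)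
        simpa [Pi.single_apply, mul_ite, ite_mul, Finset.sum_ite_eq'] using hqq
      have hGnn : ∀ j, 0 ≤ Ψ j x := fun j => hΨnn j x
      have hGB : ∀ j, Ψ j x ≤ B := by
        intro j
        rw [hΨeq j x hx2]
        calc Gcut δ (U j x) ≤ max (U j x) 0 := Gcut_le_max hδ _
          _ ≤ B := max_le (le_trans (le_abs_self _) (hB j x (subset_closure hx2))) hB0
      have haG : ∀ j, U j x ≤ Ψ j x + 3*δ := by
        intro j
        rw [hΨeq j x hx2]
        have := Gcut_ge hδ (U j x)
        linarith
      have hterm : ∀ i' j : Fin m,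
          D i' j x * Ψ i' x * Ψ j x - 3*δ*M*B ≤ D i' j x * U i' x * Ψ j x := by
        intro i' j
        by_cases hij : i' = j
        · subst hij
          have h1 : Ψ i' x * Ψ i' x ≤ U i' x * Ψ i' x := by
            by_cases hz : Ψ i' x = 0
            · simp [hz]
            · have h2δ : 2*δ < U i' x := by
                rw [hΨeq i' x hx2] at hz
                exact Gcut_pos_lt hδ hz
              have hle : Ψ i' x ≤ U i' x := by
                rw [hΨeq i' x hx2]
                calc Gcut δ (U i' x) ≤ max (U i' x) 0 := Gcut_le_max hδ _
                  _ = U i' x := max_eq_left (by linarith)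
              exact mul_le_mul_of_nonneg_right hle (hGnn i')
          have h2 := mul_le_mul_of_nonneg_left h1 (hdiag i')
          have h5 : (0:ℝ) ≤ 3*δ*M*B := by positivity
          nlinarith [h2, h5]
        · have hd := hco i' j hij
          have hdM : -M ≤ D i' j x := by
            have := hM i' j x (hsub hx2)
            rw [abs_le] at this
            exact this.1
          have h1 : D i' j x * (Ψ i' x + 3*δ) ≤ D i' j x * U i' x :=
            mul_le_mul_of_nonpos_left (haG i') hd
          have h2 : (D i' j x * (Ψ i' x + 3*δ)) * Ψ j x ≤ (D i' j x * U i' x) * Ψ j x :=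
            mul_le_mul_of_nonneg_right h1 (hGnn j)
          have h3 : D i' j x * Ψ i' x * Ψ j x + 3*δ*(D i' j x)*(Ψ j x)
              = (D i' j x * (Ψ i' x + 3*δ)) * Ψ j x := by ring
          have h4a : (3*δ)*(-M) ≤ (3*δ)*(D i' j x) :=
            mul_le_mul_of_nonneg_left hdM (by positivity)
          have h4b : ((3*δ)*(-M))*(Ψ j x) ≤ ((3*δ)*(D i' j x))*(Ψ j x) :=
            mul_le_mul_of_nonneg_right h4a (hGnn j)
          have h4c : ((3*δ)*M)*(Ψ j x) ≤ ((3*δ)*M)*B :=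
            mul_le_mul_of_nonneg_left (hGB j) (by positivity)
          nlinarith [h2, h3, h4b, h4c]
      have hsum1 : ∑ i', ∑ j, (D i' j x * Ψ i' x * Ψ j x - 3*δ*M*B)
          ≤ ∑ i', ∑ j, D i' j x * U i' x * Ψ j x :=
        Finset.sum_le_sum fun i' _ => Finset.sum_le_sum fun j _ => hterm i' j
      have hsum2 : ∑ i', ∑ j, (D i' j x * Ψ i' x * Ψ j x - 3*δ*M*B)
          = (∑ i', ∑ j, D i' j x * Ψ i' x * Ψ j x) - (m:ℝ)^2 * (3*δ*M*B) := by
        rw [Finset.sum_congr rfl (fun i' _ => Finset.sum_sub_distrib _ _),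
          Finset.sum_sub_distrib]
        simp only [Finset.sum_const, Finset.card_univ, Fintype.card_fin, nsmul_eq_mul]
        ring
      have hq2 : 0 ≤ ∑ i', ∑ j, D i' j x * Ψ i' x * Ψ j x := hq (fun k => Ψ k x)
      rw [hF1g]
      have : -(δ * (3*M*B*(m:ℝ)^2)) ≤ ∑ i', ∑ j, D i' j x * U i' x * Ψ j x := by
        rw [hsum2] at hsum1
        nlinarith
      linarith
    have hconst : IntegrableOn (fun _ : EuclN N => δ * (3*M*B*(m:ℝ)^2)) Ω' volume :=
      integrableOn_const hfin
    have hchain : ∫ x in Ω', ∑ j, hramp δ (U j x) * ‖gradient (U j) x‖^2 ≤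
        ∫ x in Ω', (((∑ j, ⟪gradient (U j) x, gradient (Ψ j) x⟫) +
          ∑ i', ∑ j, D i' j x * U i' x * Ψ j x) + δ * (3*M*B*(m:ℝ)^2)) :=
      integral_mono_ae hgint (hFint.add hconst) hptwise
    have hsplit : ∫ x in Ω', (((∑ j, ⟪gradient (U j) x, gradient (Ψ j) x⟫) +
          ∑ i', ∑ j, D i' j x * U i' x * Ψ j x) + δ * (3*M*B*(m:ℝ)^2))
        = (∫ x in Ω', ((∑ j, ⟪gradient (U j) x, gradient (Ψ j) x⟫) +
          ∑ i', ∑ j, D i' j x * U i' x * Ψ j x))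
          + (volume Ω').toReal * (δ * (3*M*B*(m:ℝ)^2)) := by
      rw [integral_add hFint hconst, setIntegral_const, smul_eq_mul, measureReal_def]
    refine ⟨hgint, ?_⟩
    rw [hFeq] at hBform
    calc ∫ x in Ω', ∑ j, hramp δ (U j x) * ‖gradient (U j) x‖^2
        ≤ _ := hchain
      _ = _ := hsplit
      _ ≤ 0 + (volume Ω').toReal * (δ * (3*M*B*(m:ℝ)^2)) := by
          apply add_le_add_left hBform
      _ = δ * C := by rw [hCdef]; ring
  -- gradient of U i vanishes where U i > 0
  have hWopen : IsOpen (Ω' ∩ U i ⁻¹' (Ioi 0)) :=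
    ContinuousOn.isOpen_inter_preimage ((hUc i).mono subset_closure) hΩ'o isOpen_Ioi
  have hx₀W : x₀ ∈ Ω' ∩ U i ⁻¹' (Ioi 0) := ⟨hx₀, hposc⟩
  have hgrad0 : ∀ y ∈ Ω' ∩ U i ⁻¹' (Ioi 0), gradient (U i) y = 0 := by
    intro y hy
    by_contra hne
    have hcpos : (0:ℝ) < U i y := hy.2
    have hVo : IsOpen (Ω' ∩ U i ⁻¹' (Ioi (U i y / 2))) :=
      ContinuousOn.isOpen_inter_preimage ((hUc i).mono subset_closure) hΩ'o isOpen_Ioi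
    have hyV : y ∈ Ω' ∩ U i ⁻¹' (Ioi (U i y / 2)) := ⟨hy.1, by
      simp only [mem_preimage, mem_Ioi]; linarith⟩
    obtain ⟨ρ, hρpos, hρsub⟩ := Metric.isOpen_iff.1 hVo y hyV
    have hεpos : (0:ℝ) < ‖gradient (U i) y‖^2 := by
      have := norm_pos_iff.2 hne
      positivity
    have hconty : ContinuousAt (fun z => ‖gradient (U i) z‖^2) y :=
      (((hgradc i).norm).pow 2).continuousAt (hΩ'o.mem_nhds hy.1)
    have hev : ∀ᶠ z in nhds y, ‖gradient (U i) y‖^2/2 < ‖gradient (U i) z‖^2 :=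
      hconty.eventually_const_lt (by linarith)
    obtain ⟨r, hrpos, hrsub⟩ := Metric.eventually_nhds_iff_ball.1 hev
    set ρ' : ℝ := min (r/2) (ρ/2) with hρ'def
    have hρ'pos : 0 < ρ' := lt_min (by linarith) (by linarith)
    have hρ'r : ρ' < r := lt_of_le_of_lt (min_le_left _ _) (by linarith)
    have hρ'ρ : ρ' < ρ := lt_of_le_of_lt (min_le_right _ _) (by linarith)
    have hcbsub : Metric.closedBall y ρ' ⊆ Ω' ∩ U i ⁻¹' (Ioi (U i y / 2)) := by
      intro z hz
      exact hρsub (lt_of_le_of_lt (Metric.mem_closedBall.1 hz) hρ'ρ)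
    have hballΩ : Metric.ball y ρ' ⊆ Ω' :=
      fun z hz => (hcbsub (Metric.ball_subset_closedBall hz)).1
    set L : ℝ := (‖gradient (U i) y‖^2/2) * (volume (Metric.ball y ρ')).toReal with hLdef
    have hballfin : volume (Metric.ball y ρ') ≠ ⊤ := measure_ball_lt_top.ne
    have hLpos : 0 < L := mul_pos (by linarith)
      (ENNReal.toReal_pos (Metric.measure_ball_pos _ _ hρ'pos).ne' hballfin)
    set δ : ℝ := min (U i y / 12) (L / (2*(C+1))) with hδdef
    have hδpos : 0 < δ := lt_min (by linarith) (div_pos hLpos (by linarith))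
    have h3δ : 3*δ < U i y / 2 := by
      have h1 : δ ≤ U i y / 12 := min_le_left _ _
      linarith
    have hδC : δ * C < L := by
      have h1 : δ ≤ L / (2*(C+1)) := min_le_right _ _
      have h2 : δ * (2*(C+1)) ≤ L := by
        rw [← le_div_iff₀ (by linarith : (0:ℝ) < 2*(C+1))]
        exact h1
      nlinarith
    obtain ⟨hgint, hkey⟩ := key δ hδpos
    have hfcont : ContinuousOn (fun z => ‖gradient (U i) z‖^2) (Metric.closedBall y ρ') :=
      (((hgradc i).norm).pow 2).mono (fun z hz => (hcbsub hz).1)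
    have hfint : IntegrableOn (fun z => ‖gradient (U i) z‖^2) (Metric.ball y ρ') volume :=
      (hfcont.integrableOn_compact (isCompact_closedBall y ρ')).mono_set
        Metric.ball_subset_closedBall
    have hlow : L ≤ ∫ z in Metric.ball y ρ', ‖gradient (U i) z‖^2 := by
      have hmono : ∫ z in Metric.ball y ρ', (‖gradient (U i) y‖^2/2)
          ≤ ∫ z in Metric.ball y ρ', ‖gradient (U i) z‖^2 := by
        apply setIntegral_mono_on (integrableOn_const ?_) hfint
          measurableSet_ball
        · intro z hz
          exact (hrsub z (lt_of_lt_of_le (Metric.mem_ball.1 hz) hρ'r.le)).le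
        · exact hballfin
      calc L = ∫ _ in Metric.ball y ρ', (‖gradient (U i) y‖^2/2) := by
            rw [setIntegral_const, smul_eq_mul, hLdef, mul_comm, measureReal_def]
        _ ≤ _ := hmono
    have hind : ∫ z in Metric.ball y ρ', ‖gradient (U i) z‖^2
        = ∫ x in Ω', (Metric.ball y ρ').indicator (fun z => ‖gradient (U i) z‖^2) x := by
      rw [setIntegral_indicator measurableSet_ball,
        inter_eq_self_of_subset_right hballΩ]
    have hindint : IntegrableOn
        ((Metric.ball y ρ').indicator fun z => ‖gradient (U i) z‖^2) Ω' volume := by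
      rw [IntegrableOn, MeasureTheory.integrable_indicator_iff measurableSet_ball]
      rw [IntegrableOn, Measure.restrict_restrict measurableSet_ball,
        inter_eq_self_of_subset_left hballΩ]
      exact hfint
    have hmid : ∫ x in Ω', (Metric.ball y ρ').indicator (fun z => ‖gradient (U i) z‖^2) x
        ≤ ∫ x in Ω', ∑ j, hramp δ (U j x) * ‖gradient (U j) x‖^2 := by
      apply setIntegral_mono_on hindint hgint hΩ'm
      intro z hz
      by_cases hzb : z ∈ Metric.ball y ρ'
      · rw [indicator_of_mem hzb]
        have hUz : U i y / 2 < U i z := (hcbsub (Metric.ball_subset_closedBall hzb)).2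
        have h1 : hramp δ (U i z) = 1 := hramp_eq_one hδpos (by linarith)
        calc ‖gradient (U i) z‖^2 = hramp δ (U i z) * ‖gradient (U i) z‖^2 := by
              rw [h1, one_mul]
          _ ≤ ∑ j, hramp δ (U j z) * ‖gradient (U j) z‖^2 :=
              Finset.single_le_sum (f := fun j => hramp δ (U j z) * ‖gradient (U j) z‖^2)
                (fun j _ => mul_nonneg (hramp_nonneg δ _ hδpos) (by positivity))
                (Finset.mem_univ i)
      · rw [indicator_of_notMem hzb]
        exact Finset.sum_nonneg fun j _ =>
          mul_nonneg (hramp_nonneg δ _ hδpos) (by positivity)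
    rw [hind] at hlow
    linarith
  -- U i is locally constant on W
  have hlocconst : ∀ z ∈ Ω' ∩ U i ⁻¹' (Ioi 0), ∃ r > 0,
      Metric.ball z r ⊆ Ω' ∩ U i ⁻¹' (Ioi 0) ∧
      ∀ w ∈ Metric.ball z r, U i w = U i z := by
    intro z hz
    obtain ⟨r, hr, hrsub⟩ := Metric.isOpen_iff.1 hWopen z hz
    refine ⟨r, hr, hrsub, ?_⟩
    intro w hw
    have hdiff : DifferentiableOn ℝ (U i) (Metric.ball z r) :=
      fun p hp => (hUd i p (hrsub hp).1).differentiableWithinAt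
    apply (convex_ball z r).is_const_of_fderivWithin_eq_zero hdiff ?_ hw
      (Metric.mem_ball_self hr)
    intro p hp
    rw [fderivWithin_of_isOpen Metric.isOpen_ball hp]
    have hg0 := hgrad0 p (hrsub hp)
    have : (InnerProductSpace.toDual ℝ (EuclN N)).symm (fderiv ℝ (U i) p) = 0 := hg0
    rwa [LinearIsometryEquiv.map_eq_zero_iff] at this
  -- the connected component
  set V : Set (EuclN N) := connectedComponentIn (Ω' ∩ U i ⁻¹' (Ioi 0)) x₀ with hVdef
  have hVsub : V ⊆ Ω' ∩ U i ⁻¹' (Ioi 0) := connectedComponentIn_subset _ _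
  have hVsubΩ : V ⊆ Ω' := fun p hp => (hVsub hp).1
  have hx₀V : x₀ ∈ V := mem_connectedComponentIn hx₀W
  have hVconst : ∀ z ∈ V, U i z = U i x₀ := by
    have hu : IsOpen {z ∈ Ω' ∩ U i ⁻¹' (Ioi 0) | U i z = U i x₀} := by
      rw [Metric.isOpen_iff]
      intro z hz
      obtain ⟨r, hr, hrsub, hconst⟩ := hlocconst z hz.1
      exact ⟨r, hr, fun w hw => ⟨hrsub hw, by rw [hconst w hw, hz.2]⟩⟩
    have hv : IsOpen {z ∈ Ω' ∩ U i ⁻¹' (Ioi 0) | U i z ≠ U i x₀} := by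
      rw [Metric.isOpen_iff]
      intro z hz
      obtain ⟨r, hr, hrsub, hconst⟩ := hlocconst z hz.1
      exact ⟨r, hr, fun w hw => ⟨hrsub hw, by rw [hconst w hw]; exact hz.2⟩⟩
    have hdisj : Disjoint {z ∈ Ω' ∩ U i ⁻¹' (Ioi 0) | U i z = U i x₀}
        {z ∈ Ω' ∩ U i ⁻¹' (Ioi 0) | U i z ≠ U i x₀} := by
      rw [disjoint_left]
      rintro a ⟨_, ha⟩ ⟨_, hna⟩
      exact hna ha
    have hsubuv : V ⊆ {z ∈ Ω' ∩ U i ⁻¹' (Ioi 0) | U i z = U i x₀} ∪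
        {z ∈ Ω' ∩ U i ⁻¹' (Ioi 0) | U i z ≠ U i x₀} := by
      intro z hz
      by_cases hc : U i z = U i x₀
      · exact Or.inl ⟨hVsub hz, hc⟩
      · exact Or.inr ⟨hVsub hz, hc⟩
    have hne : (V ∩ {z ∈ Ω' ∩ U i ⁻¹' (Ioi 0) | U i z = U i x₀}).Nonempty :=
      ⟨x₀, hx₀V, hx₀W, rfl⟩
    have := (isPreconnected_connectedComponentIn).subset_left_of_subset_union
      hu hv hdisj hsubuv hne
    exact fun z hz => (this hz).2
  have hVopen : IsOpen V := hWopen.connectedComponentIn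
  have hVnuniv : V ≠ univ := by
    intro hVu
    obtain ⟨R, hR⟩ := (Metric.isBounded_iff_subset_closedBall 0).1 (hΩ'b.subset hVsubΩ)
    have hNpos : 0 < N := by omega
    set e : EuclN N := EuclideanSpace.single (⟨0, hNpos⟩ : Fin N) (|R|+1) with hedef
    have heV : e ∈ V := hVu ▸ mem_univ e
    have := hR heV
    rw [Metric.mem_closedBall, dist_zero_right] at this
    rw [hedef, EuclideanSpace.norm_single] at this
    have : |R| + 1 ≤ R := le_trans (by simp [abs_of_nonneg, le_abs_self]) this
    have h2 := le_abs_self R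
    linarith [abs_nonneg R]
  have hfr : (frontier V).Nonempty := by
    by_contra hemp
    rw [not_nonempty_iff_eq_empty] at hemp
    rcases isClopen_iff.1 (isClopen_iff_frontier_eq_empty.2 hemp) with h | h
    · exact absurd (h ▸ hx₀V) (notMem_empty x₀)
    · exact hVnuniv h
  obtain ⟨z, hzfr⟩ := hfr
  have hzcl : z ∈ closure V := frontier_subset_closure hzfr
  have hznot : z ∉ V := by
    rw [hVopen.frontier_eq] at hzfr
    exact hzfr.2
  have hzA : z ∈ closure Ω' := closure_mono hVsubΩ hzcl
  have hzc₀ : U i z = U i x₀ := by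
    have hE : IsClosed (closure Ω' ∩ U i ⁻¹' {U i x₀}) :=
      (hUc i).preimage_isClosed_of_isClosed isClosed_closure isClosed_singleton
    have hVE : V ⊆ closure Ω' ∩ U i ⁻¹' {U i x₀} :=
      fun p hp => ⟨subset_closure (hVsubΩ hp), hVconst p hp⟩
    exact (closure_minimal hVE hE hzcl).2
  by_cases hzΩ : z ∈ Ω'
  · have hzW : z ∈ Ω' ∩ U i ⁻¹' (Ioi 0) := ⟨hzΩ, by
      simp only [mem_preimage, mem_Ioi, hzc₀]; exact hposc⟩
    obtain ⟨r, hr, hrsub⟩ := Metric.isOpen_iff.1 hWopen z hzW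
    obtain ⟨w, hwb, hwV⟩ : ∃ w, w ∈ Metric.ball z r ∧ w ∈ V := by
      have := mem_closure_iff.1 hzcl (Metric.ball z r) Metric.isOpen_ball
        (Metric.mem_ball_self hr)
      obtain ⟨w, hw1, hw2⟩ := this
      exact ⟨w, hw1, hw2⟩
    have hunion : IsPreconnected (V ∪ Metric.ball z r) :=
      IsPreconnected.union w hwV hwb isPreconnected_connectedComponentIn
        (convex_ball z r).isPreconnected
    have hsubW : V ∪ Metric.ball z r ⊆ Ω' ∩ U i ⁻¹' (Ioi 0) := union_subset hVsub hrsub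
    have hVV : V ∪ Metric.ball z r ⊆ V :=
      hunion.subset_connectedComponentIn (Or.inl hx₀V) hsubW
    exact hznot (hVV (Or.inr (Metric.mem_ball_self hr)))
  · have hzfrΩ : z ∈ frontier Ω' := hΩ'o.frontier_eq ▸ ⟨hzA, hzΩ⟩
    have := hbdry i z hzfrΩ
    rw [hzc₀] at this
    linarith
end

section
/- (Monotonicity of the first eigenvalue with respect to the coefficients.) Let Ω be a bounded open set in ℝ^N, N ≥ 2, and let C = (c_ij), C' = (c'_ij) be symmetric matrices with entries in L^∞(Ω), such that the system −ΔU + C(x)U is cooperative and fully coupled in Ω and c_ij ≥ c'_ij a.e. in Ω for all i,j. Let λ_1 := inf{ R(V) : V ∈ C^1_c(Ω;ℝ^m), V ≠ 0 } and λ'_1 := inf{ R'(V) : V ∈ C^1_c(Ω;ℝ^m), V ≠ 0 } be the first eigenvalues of the two systems, where R, R' are the Rayleigh quotients of C and C'. Assume λ_1 is attained by a first eigenfunction W¹ ∈ C¹(Ω̄;ℝ^m), W¹ = 0 on ∂Ω, W¹ ≠ 0, with B(W¹,V) = λ_1 ∫_Ω W¹·V dx for all V ∈ C^1_c(Ω;ℝ^m).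 Then λ_1 ≥ λ'_1. -/
open MeasureTheory Real Set
open scoped RealInnerProductSpace ENNReal

noncomputable section Aux
open Filter

/-! ### Smoothed absolute value -/

def phiE (ε t : ℝ) : ℝ := Real.sqrt (t^2 + ε^2) - ε

variable {ε : ℝ}

lemma phiE_pos_aux (hε : 0 < ε) (t : ℝ) : (0:ℝ) < t^2 + ε^2 := by positivity

lemma phiE_contDiff (hε : 0 < ε) : ContDiff ℝ 1 (phiE ε) := by
  have h1 : ContDiff ℝ 1 (fun t : ℝ => Real.sqrt (t^2 + ε^2)) := by
    rw [contDiff_iff_contDiffAt]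
    intro t
    exact (Real.contDiffAt_sqrt (phiE_pos_aux hε t).ne').comp t
      ((contDiff_id.pow 2).add contDiff_const).contDiffAt
  exact h1.sub contDiff_const

lemma phiE_nonneg (hε : 0 < ε) (t : ℝ) : 0 ≤ phiE ε t := by
  have : ε ≤ Real.sqrt (t^2 + ε^2) := by
    rw [show ε = Real.sqrt (ε^2) by rw [Real.sqrt_sq hε.le]]
    exact Real.sqrt_le_sqrt (by nlinarith [Real.sq_sqrt (show (0:ℝ) ≤ ε^2 by positivity)])
  simp only [phiE]; linarith

lemma phiE_le_abs (hε : 0 < ε) (t : ℝ) : phiE ε t ≤ |t| := by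
  have h : Real.sqrt (t^2 + ε^2) ≤ |t| + ε := by
    rw [show |t| + ε = Real.sqrt ((|t| + ε)^2) by rw [Real.sqrt_sq (by positivity)]]
    apply Real.sqrt_le_sqrt
    have := abs_nonneg t
    nlinarith [sq_abs t]
  simp only [phiE]; linarith

lemma abs_sub_le_phiE (hε : 0 < ε) (t : ℝ) : |t| - ε ≤ phiE ε t := by
  have h : |t| ≤ Real.sqrt (t^2 + ε^2) := by
    rw [show |t| = Real.sqrt (t^2) by rw [Real.sqrt_sq_eq_abs]]
    exact Real.sqrt_le_sqrt (by nlinarith)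
  simp only [phiE]; linarith

lemma phiE_zero (hε : 0 < ε) : phiE ε 0 = 0 := by
  simp [phiE, Real.sqrt_sq hε.le]

lemma phiE_ne_zero {t : ℝ} (hε : 0 < ε) (ht : t ≠ 0) : phiE ε t ≠ 0 := by
  have h : Real.sqrt (ε^2) < Real.sqrt (t^2 + ε^2) := by
    apply Real.sqrt_lt_sqrt (by positivity)
    nlinarith [show 0 < t^2 by positivity]
  rw [Real.sqrt_sq hε.le] at h
  simp only [phiE]; intro h0; linarith

lemma phiE_hasDerivAt (hε : 0 < ε) (t : ℝ) :
    HasDerivAt (phiE ε) (2 * t / (2 * Real.sqrt (t^2 + ε^2))) t := by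
  have h : HasDerivAt (fun t : ℝ => t^2 + ε^2) (2*t) t := by
    simpa using ((hasDerivAt_pow 2 t).add_const (ε^2))
  exact (h.sqrt (phiE_pos_aux hε t).ne').sub_const ε

lemma phiE_deriv_abs_le (hε : 0 < ε) (t : ℝ) :
    |2 * t / (2 * Real.sqrt (t^2 + ε^2))| ≤ 1 := by
  have hs : |t| ≤ Real.sqrt (t^2 + ε^2) := by
    rw [show |t| = Real.sqrt (t^2) by rw [Real.sqrt_sq_eq_abs]]
    exact Real.sqrt_le_sqrt (by nlinarith)
  have hs0 : 0 < Real.sqrt (t^2 + ε^2) := Real.sqrt_pos.2 (phiE_pos_aux hε t)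
  rw [abs_div, div_le_one (by positivity)]
  rw [abs_mul, abs_mul, abs_two, abs_of_pos hs0]
  linarith

/-! ### Elementary inequalities -/

lemma lemOff (c' c M a b ε Pa Pb : ℝ) (h1 : c' ≤ c) (h2 : c ≤ 0) (h3 : |c| ≤ M)
    (hε : 0 ≤ ε) (hPa0 : 0 ≤ Pa) (hPa1 : Pa ≤ |a|) (hPa2 : |a| - ε ≤ Pa)
    (hPb0 : 0 ≤ Pb) (hPb1 : Pb ≤ |b|) (hPb2 : |b| - ε ≤ Pb) :
    c' * Pa * Pb ≤ c * a * b + ε * (M * (|a| + |b|)) := by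
  have hM : -c ≤ M := by cases abs_cases c with
    | inl h => linarith [h.1]
    | inr h => linarith [h.1]
  have key : a * b - ε * (|a| + |b|) ≤ Pa * Pb := by
    nlinarith [abs_nonneg a, abs_nonneg b, neg_abs_le a, neg_abs_le b, le_abs_self (a*b),
      abs_mul a b, mul_nonneg hPa0 hPb0]
  have h4 : c' * (Pa * Pb) ≤ c * (Pa * Pb) := mul_le_mul_of_nonneg_right h1 (mul_nonneg hPa0 hPb0)
  have h5 : c * (Pa * Pb) ≤ c * (a * b - ε * (|a| + |b|)) := mul_le_mul_of_nonpos_left key h2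
  have h6 : c * (a * b - ε * (|a| + |b|)) ≤ c * a * b + ε * (M * (|a| + |b|)) := by
    have : 0 ≤ |a| + |b| := by positivity
    nlinarith [mul_nonneg (mul_nonneg (show (0:ℝ) ≤ M + c by linarith) hε) this]
  calc c' * Pa * Pb = c' * (Pa * Pb) := by ring
    _ ≤ c * a * b + ε * (M * (|a| + |b|)) := by linarith [h4, h5, h6]

lemma lemDiag (c' c M a ε Pa : ℝ) (h1 : c' ≤ c) (h3 : |c'| ≤ M)
    (hε : 0 ≤ ε) (hPa0 : 0 ≤ Pa) (hPa1 : Pa ≤ |a|) (hPa2 : |a| - ε ≤ Pa) :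
    c' * Pa * Pa ≤ c * a * a + ε * (M * (|a| + |a|)) := by
  have hM1 : -M ≤ c' := by cases abs_cases c' with
    | inl h => linarith [h.1, abs_nonneg c']
    | inr h => linarith [h.1]
  have hM2 : c' ≤ M := le_of_abs_le h3
  have hsq : Pa * Pa ≤ a * a := by nlinarith [sq_abs a, abs_nonneg a]
  have hsq2 : a * a - 2 * ε * |a| ≤ Pa * Pa := by
    rcases le_or_gt (|a|) ε with h | h
    · nlinarith [sq_abs a, abs_nonneg a, mul_self_nonneg Pa]
    · nlinarith [sq_abs a, abs_nonneg a]
  have haa : 0 ≤ a * a := mul_self_nonneg a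
  rcases le_or_gt c' 0 with hc | hc
  · nlinarith [abs_nonneg a]
  · nlinarith [abs_nonneg a]

lemma sq_le_sq_of_abs (a ε Pa : ℝ) (hε : 0 ≤ ε) (hPa0 : 0 ≤ Pa) (hPa1 : Pa ≤ |a|)
    (hPa2 : |a| - ε ≤ Pa) : a^2 - ε * (2 * |a|) ≤ Pa^2 ∧ Pa^2 ≤ a^2 := by
  constructor
  · rcases le_or_gt (|a|) ε with h | h
    · nlinarith [sq_abs a, abs_nonneg a, sq_nonneg Pa]
    · nlinarith [sq_abs a, abs_nonneg a]
  · nlinarith [sq_abs a, abs_nonneg a]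

/-! ### Gradient facts -/

variable {N : ℕ}

lemma norm_grad (f : EuclN N → ℝ) (x : EuclN N) : ‖gradient f x‖ = ‖fderiv ℝ f x‖ :=
  LinearIsometryEquiv.norm_map _ _

lemma grad_continuous {f : EuclN N → ℝ} (hf : ContDiff ℝ 1 f) : Continuous (gradient f) := by
  have : gradient f = fun x => (InnerProductSpace.toDual ℝ _).symm (fderiv ℝ f x) := rfl
  rw [this]
  exact (LinearIsometryEquiv.continuous _).comp (hf.continuous_fderiv one_ne_zero)

lemma grad_zero_of_not_mem {f : EuclN N → ℝ} {x : EuclN N} (hx : x ∉ tsupport f) :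
    gradient f x = 0 := by
  have h : fderiv ℝ f x = 0 := by
    by_contra h
    exact hx (support_fderiv_subset ℝ (Function.mem_support.2 h))
  show (InnerProductSpace.toDual ℝ _).symm (fderiv ℝ f x) = 0
  rw [h]; simp

lemma gradsq_integrable {f : EuclN N → ℝ} (hf : ContDiff ℝ 1 f) (hc : HasCompactSupport f) :
    Integrable (fun x => ⟪gradient f x, gradient f x⟫) := by
  apply Continuous.integrable_of_hasCompactSupport
  · exact (grad_continuous hf).inner (grad_continuous hf)
  · apply HasCompactSupport.intro hc
    intro x hx
    rw [grad_zero_of_not_mem hx]; simp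

lemma phiE_comp_grad_le {f : EuclN N → ℝ} (hf : ContDiff ℝ 1 f) (hε : 0 < ε) (x : EuclN N) :
    ⟪gradient (fun y => phiE ε (f y)) x, gradient (fun y => phiE ε (f y)) x⟫ ≤
      ⟪gradient f x, gradient f x⟫ := by
  have hfd : HasFDerivAt f (fderiv ℝ f x) x :=
    (hf.differentiable one_ne_zero x).hasFDerivAt
  have hcomp : HasFDerivAt (fun y => phiE ε (f y))
      ((2 * f x / (2 * Real.sqrt ((f x)^2 + ε^2))) • fderiv ℝ f x) x :=
    (phiE_hasDerivAt hε (f x)).comp_hasFDerivAt x hfd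
  have h1 : ‖gradient (fun y => phiE ε (f y)) x‖ ≤ ‖gradient f x‖ := by
    rw [norm_grad, norm_grad, hcomp.fderiv, norm_smul]
    calc ‖2 * f x / (2 * Real.sqrt ((f x)^2 + ε^2))‖ * ‖fderiv ℝ f x‖
        ≤ 1 * ‖fderiv ℝ f x‖ :=
          mul_le_mul_of_nonneg_right (phiE_deriv_abs_le hε (f x)) (norm_nonneg _)
      _ = ‖fderiv ℝ f x‖ := one_mul _
  rw [real_inner_self_eq_norm_sq, real_inner_self_eq_norm_sq]
  exact pow_le_pow_left₀ (norm_nonneg _) h1 2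

lemma phiE_comp_support {f : EuclN N → ℝ} (hε : 0 < ε) :
    Function.support (fun y => phiE ε (f y)) = Function.support f := by
  ext x
  simp only [Function.mem_support]
  constructor
  · intro h hf0; exact h (by rw [hf0]; exact phiE_zero hε)
  · intro h; exact phiE_ne_zero hε h

lemma phiE_comp_testfun {m : ℕ} {Ω : Set (EuclN N)} (hε : 0 < ε)
    {Ψ : Fin m → EuclN N → ℝ} (hΨ : IsTestFun Ω Ψ) :
    IsTestFun Ω (fun i y => phiE ε (Ψ i y)) := by
  intro i
  have hts : tsupport (fun y => phiE ε (Ψ i y)) = tsupport (Ψ i) := by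
    unfold tsupport; rw [phiE_comp_support hε]
  refine ⟨(phiE_contDiff hε).comp (hΨ i).1, ?_, ?_⟩
  · show IsCompact (tsupport _)
    rw [hts]; exact (hΨ i).2.1
  · rw [hts]; exact (hΨ i).2.2

/-! ### Integrability helpers -/

lemma aux_cont_cpt_integrableOn {m : ℕ} {Ω : Set (EuclN N)} {Ψ : Fin m → EuclN N → ℝ}
    (hΨ : IsTestFun Ω Ψ) {g : EuclN N → ℝ} (hg : Continuous g)
    (hsupp : ∀ x, (∀ i, Ψ i x = 0) → g x = 0) : IntegrableOn g Ω := by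
  apply Integrable.integrableOn
  apply hg.integrable_of_hasCompactSupport
  apply HasCompactSupport.intro (isCompact_iUnion fun i => (hΨ i).2.1)
  intro x hx
  simp only [Set.mem_iUnion, not_exists] at hx
  exact hsupp x fun i => image_eq_zero_of_notMem_tsupport (hx i)

lemma bounded_cont_cpt {f : EuclN N → ℝ} (hf : Continuous f) (hc : HasCompactSupport f) :
    ∃ B : ℝ, ∀ x, |f x| ≤ B := by
  obtain ⟨B, hB⟩ := hc.exists_bound_of_continuous hf
  exact ⟨B, fun x => hB x⟩

lemma coeff_mul_integrableOn {Ω : Set (EuclN N)} (hΩo : IsOpen Ω)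
    (hΩb : Bornology.IsBounded Ω) {c f : EuclN N → ℝ} (hm : Measurable c)
    {M : ℝ} (hM : ∀ x ∈ Ω, |c x| ≤ M) (hf : Continuous f) (hc : HasCompactSupport f) :
    IntegrableOn (fun x => c x * f x) Ω := by
  obtain ⟨B, hB⟩ := bounded_cont_cpt hf hc
  have hB0 : 0 ≤ B := le_trans (abs_nonneg _) (hB 0)
  have hμ : volume Ω < ∞ := hΩb.measure_lt_top
  have hconst : IntegrableOn (fun _ => max M 0 * B) Ω := integrableOn_const hμ.ne
  apply Integrable.mono' hconst
  · exact ((hm.mul hf.measurable).aestronglyMeasurable).restrict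
  · rw [ae_restrict_iff' hΩo.measurableSet]
    filter_upwards with x hx
    have h1 : |c x| ≤ max M 0 := le_trans (hM x hx) (le_max_left _ _)
    calc ‖c x * f x‖ = |c x| * |f x| := abs_mul _ _
      _ ≤ max M 0 * B := mul_le_mul h1 (hB x) (abs_nonneg _) (le_max_right _ _)

lemma aux_core_integrableOn {m : ℕ} {Ω : Set (EuclN N)} (hΩo : IsOpen Ω)
    (hΩb : Bornology.IsBounded Ω) {C : Fin m → Fin m → EuclN N → ℝ}
    (hmeas : ∀ i j, Measurable (C i j)) {M : Fin m → Fin m → ℝ}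
    (hM : ∀ i j, ∀ x ∈ Ω, |C i j x| ≤ M i j) {Ψ : Fin m → EuclN N → ℝ}
    (hΨ : IsTestFun Ω Ψ) :
    IntegrableOn (fun x => (∑ i, ⟪gradient (Ψ i) x, gradient (Ψ i) x⟫) +
      ∑ i, ∑ j, C i j x * Ψ i x * Ψ j x) Ω := by
  apply Integrable.add
  · exact (integrable_finset_sum _ fun i _ =>
      gradsq_integrable (hΨ i).1 (hΨ i).2.1).integrableOn
  · apply integrable_finset_sum
    intro i _
    apply integrable_finset_sum
    intro j _
    have hcs : HasCompactSupport (fun x => Ψ i x * Ψ j x) := by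
      apply HasCompactSupport.intro (hΨ i).2.1
      intro x hx
      rw [image_eq_zero_of_notMem_tsupport hx, zero_mul]
    have := coeff_mul_integrableOn hΩo hΩb (hmeas i j) (hM i j)
      (((hΨ i).1.continuous).mul ((hΨ j).1.continuous)) hcs
    simpa [mul_assoc, IntegrableOn] using this

lemma denom_pos {Ω : Set (EuclN N)} (hΩo : IsOpen Ω) {m : ℕ}
    {Ψ : Fin m → EuclN N → ℝ} (hΨ : IsTestFun Ω Ψ)
    (hne : ∃ i x, Ψ i x ≠ 0) :
    0 < ∫ x in Ω, ∑ i, (Ψ i x) ^ 2 := by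
  obtain ⟨i₀, x₀, hx₀⟩ := hne
  have hcont : Continuous (fun x => ∑ i, (Ψ i x)^2) :=
    continuous_finset_sum _ fun i _ => ((hΨ i).1.continuous).pow 2
  have hint : IntegrableOn (fun x => ∑ i, (Ψ i x)^2) Ω := by
    apply aux_cont_cpt_integrableOn hΨ hcont
    intro x hx
    apply Finset.sum_eq_zero
    intro i _
    rw [hx i]; ring
  rw [setIntegral_pos_iff_support_of_nonneg_ae]
  · have hopen : IsOpen (Function.support (fun x => ∑ i, (Ψ i x)^2) ∩ Ω) :=
      (isOpen_ne_fun hcont continuous_const).inter hΩo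
    apply hopen.measure_pos volume
    refine ⟨x₀, ?_, (hΨ i₀).2.2 (subset_tsupport _ (Function.mem_support.2 hx₀))⟩
    rw [Function.mem_support]
    have h1 : 0 < (Ψ i₀ x₀)^2 := by positivity
    have h2 : (Ψ i₀ x₀)^2 ≤ ∑ i, (Ψ i x₀)^2 :=
      Finset.single_le_sum (f := fun i => (Ψ i x₀)^2) (fun i _ => sq_nonneg _)
        (Finset.mem_univ i₀)
    intro h; rw [h] at h2; linarith
  · exact ae_of_all _ fun x => by positivity
  · exact hint

lemma lemFinal (B' B D Dε A Q δ ε : ℝ) (hD : 0 < D) (hδ : 0 < δ) (hA0 : 0 ≤ A)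
    (hQ0 : 0 ≤ Q) (hεpos : 0 < ε) (hDεpos : 0 < Dε) (hDεle : Dε ≤ D)
    (hDεge : D - ε * A ≤ Dε) (hB' : B' ≤ B + ε * Q)
    (hε1 : ε * (2 * A + 2) ≤ D) (hε2 : ε * (2 * (Q + |B / D| * A + 1)) ≤ δ * D) :
    B' / Dε ≤ B / D + δ := by
  set rr := B / D with hrrdef
  have hBrr : B = rr * D := (div_mul_cancel₀ B hD.ne').symm
  clear_value rr
  have habs : 0 ≤ |rr| := abs_nonneg rr
  have hεA : ε * A ≤ D / 2 := by nlinarith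
  have hεQ : ε * Q + |rr| * (ε * A) ≤ δ * D / 2 := by nlinarith
  have hrDε : rr * D - |rr| * (ε * A) ≤ rr * Dε := by
    have h1 : rr * (D - Dε) ≤ |rr| * (ε * A) := by
      calc rr * (D - Dε) ≤ |rr * (D - Dε)| := le_abs_self _
        _ = |rr| * |D - Dε| := abs_mul _ _
        _ ≤ |rr| * (ε * A) := by
            apply mul_le_mul_of_nonneg_left _ habs
            rw [abs_of_nonneg (by linarith : (0:ℝ) ≤ D - Dε)]
            linarith
    nlinarith
  have hδDε : δ * (D / 2) ≤ δ * Dε := by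
    apply mul_le_mul_of_nonneg_left _ hδ.le
    linarith
  rw [div_le_iff₀ hDεpos]
  have hB'le : B' ≤ rr * D + ε * Q := by rw [← hBrr]; exact hB'
  nlinarith

lemma aux_sumsq_integrableOn {m : ℕ} {Ω : Set (EuclN N)} {Ψ : Fin m → EuclN N → ℝ}
    (hΨ : IsTestFun Ω Ψ) : IntegrableOn (fun x => ∑ i, (Ψ i x)^2) Ω :=
  aux_cont_cpt_integrableOn hΨ
    (continuous_finset_sum _ fun i _ => ((hΨ i).1.continuous).pow 2)
    (fun x hx => Finset.sum_eq_zero fun i _ => by rw [hx i]; ring)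

end Aux

/-- **Monotonicity of the first eigenvalue with respect to the coefficients.** -/
theorem statement12
    {N m : ℕ} (hN : 2 ≤ N)
    (Ω : Set (EuclN N)) (hΩo : IsOpen Ω) (hΩb : Bornology.IsBounded Ω)
    (C C' : Fin m → Fin m → EuclN N → ℝ)
    (hmeas : ∀ i j, Measurable (C i j)) (hmeas' : ∀ i j, Measurable (C' i j))
    (hbdd : ∀ i j, ∃ M : ℝ, ∀ x ∈ Ω, |C i j x| ≤ M)
    (hbdd' : ∀ i j, ∃ M : ℝ, ∀ x ∈ Ω, |C' i j x| ≤ M)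
    (hsymm : ∀ i j, ∀ᵐ x ∂(volume : Measure (EuclN N)), x ∈ Ω → C i j x = C j i x)
    (hsymm' : ∀ i j, ∀ᵐ x ∂(volume : Measure (EuclN N)), x ∈ Ω → C' i j x = C' j i x)
    (hfull : LinFullyCoupled Ω C)
    (hge : ∀ i j, ∀ᵐ x ∂(volume : Measure (EuclN N)), x ∈ Ω → C' i j x ≤ C i j x)
    (W₁ : Fin m → EuclN N → ℝ)
    (hWreg : ∀ i, ContDiffOn ℝ 1 (W₁ i) (closure Ω))
    (hWbd : ∀ i, ∀ x ∈ frontier Ω, W₁ i x = 0)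
    (hWne : ∃ i, ∃ x ∈ Ω, W₁ i x ≠ 0)
    (heig : ∀ V : Fin m → EuclN N → ℝ, IsTestFun Ω V →
      BformL Ω C W₁ V = lamOneSym Ω C * ∫ x in Ω, ∑ i, W₁ i x * V i x) :
    lamOneSym Ω C' ≤ lamOneSym Ω C := by
  classical
  choose M hM using hbdd
  choose M' hM' using hbdd'
  obtain ⟨i₀, x₀, hx₀Ω, hx₀⟩ := hWne
  set S : Set ℝ := {r : ℝ | ∃ Ψ : Fin m → EuclN N → ℝ, IsTestFun Ω Ψ ∧ (∃ i x, Ψ i x ≠ 0) ∧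
    r = BformL Ω C Ψ Ψ / ∫ x in Ω, ∑ i, (Ψ i x) ^ 2} with hSdef
  set S' : Set ℝ := {r : ℝ | ∃ Ψ : Fin m → EuclN N → ℝ, IsTestFun Ω Ψ ∧ (∃ i x, Ψ i x ≠ 0) ∧
    r = BformL Ω C' Ψ Ψ / ∫ x in Ω, ∑ i, (Ψ i x) ^ 2} with hS'def
  have hlam : lamOneSym Ω C = sInf S := rfl
  have hlam' : lamOneSym Ω C' = sInf S' := rfl
  -- S is nonempty (bump function)
  have hSne : S.Nonempty := by
    obtain ⟨ρ, hρ, hball⟩ := Metric.isOpen_iff.1 hΩo x₀ hx₀Ω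
    let bf : ContDiffBump x₀ := ⟨ρ/4, ρ/2, by positivity, by linarith⟩
    have hT : IsTestFun Ω (fun (_ : Fin m) x => bf x) := by
      intro i
      refine ⟨bf.contDiff, bf.hasCompactSupport, ?_⟩
      rw [bf.tsupport_eq]
      show Metric.closedBall x₀ (ρ/2) ⊆ Ω
      exact (Metric.closedBall_subset_ball (by linarith)).trans hball
    refine ⟨_, (fun (_ : Fin m) x => bf x), hT, ⟨i₀, x₀, ?_⟩, rfl⟩
    refine (bf.pos_of_mem_ball (Metric.mem_ball_self ?_)).ne'
    show (0:ℝ) < ρ/2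
    positivity
  -- S' is bounded below
  set K' : ℝ := ∑ i : Fin m, ∑ j : Fin m, max (M' i j) 0 with hK'def
  have hSbdd : ∀ r ∈ S', -K' ≤ r := by
    rintro r ⟨Θ, hΘ, hΘne, rfl⟩
    have hD : 0 < ∫ x in Ω, ∑ i, (Θ i x)^2 := denom_pos hΩo hΘ hΘne
    rw [le_div_iff₀ hD]
    have hpt : ∀ x ∈ Ω, (-K') * (∑ i, (Θ i x)^2) ≤
        (∑ i, ⟪gradient (Θ i) x, gradient (Θ i) x⟫) + ∑ i, ∑ j, C' i j x * Θ i x * Θ j x := by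
      intro x hxΩ
      have hg : (0:ℝ) ≤ ∑ i, ⟪gradient (Θ i) x, gradient (Θ i) x⟫ :=
        Finset.sum_nonneg fun i _ => real_inner_self_nonneg
      have hterm : ∀ i j, -(max (M' i j) 0 * (∑ k, (Θ k x)^2)) ≤ C' i j x * Θ i x * Θ j x := by
        intro i j
        have h1 : (Θ i x)^2 ≤ ∑ k, (Θ k x)^2 :=
          Finset.single_le_sum (f := fun k => (Θ k x)^2) (fun k _ => sq_nonneg _)
            (Finset.mem_univ i)
        have h2 : (Θ j x)^2 ≤ ∑ k, (Θ k x)^2 :=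
          Finset.single_le_sum (f := fun k => (Θ k x)^2) (fun k _ => sq_nonneg _)
            (Finset.mem_univ j)
        have hb : |Θ i x * Θ j x| ≤ ∑ k, (Θ k x)^2 := by
          rw [abs_mul]
          nlinarith [sq_abs (Θ i x), sq_abs (Θ j x), abs_nonneg (Θ i x), abs_nonneg (Θ j x),
            sq_nonneg (|Θ i x| - |Θ j x|)]
        have hC : |C' i j x| ≤ max (M' i j) 0 := (hM' i j x hxΩ).trans (le_max_left _ _)
        have habs : |C' i j x * Θ i x * Θ j x| ≤ max (M' i j) 0 * (∑ k, (Θ k x)^2) := by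
          rw [mul_assoc, abs_mul]
          exact mul_le_mul hC hb (abs_nonneg _) (le_max_right _ _)
        linarith [neg_abs_le (C' i j x * Θ i x * Θ j x)]
      have hId : (-K') * (∑ k, (Θ k x)^2) =
          ∑ i : Fin m, ∑ j : Fin m, -(max (M' i j) 0 * (∑ k, (Θ k x)^2)) := by
        rw [hK'def]
        rw [neg_mul, Finset.sum_mul, ← Finset.sum_neg_distrib]
        congr 1; funext i
        rw [Finset.sum_mul, ← Finset.sum_neg_distrib]
      have hsum : (-K') * (∑ k, (Θ k x)^2) ≤ ∑ i, ∑ j, C' i j x * Θ i x * Θ j x := by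
        rw [hId]
        exact Finset.sum_le_sum fun i _ => Finset.sum_le_sum fun j _ => hterm i j
      linarith
    have hint1 : IntegrableOn (fun x => (-K') * (∑ i, (Θ i x)^2)) Ω :=
      (aux_sumsq_integrableOn hΘ).const_mul _
    have hint2 : IntegrableOn (fun x => (∑ i, ⟪gradient (Θ i) x, gradient (Θ i) x⟫) +
        ∑ i, ∑ j, C' i j x * Θ i x * Θ j x) Ω :=
      aux_core_integrableOn hΩo hΩb hmeas' hM' hΘ
    have hmono := setIntegral_mono_on hint1 hint2 hΩo.measurableSet hpt
    rw [integral_const_mul] at hmono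
    exact hmono
  have hBddS' : BddBelow S' := ⟨-K', fun r hr => hSbdd r hr⟩
  -- main comparison
  rw [hlam, hlam']
  apply le_csInf hSne
  rintro r ⟨Ψ, hΨ, hΨne, rfl⟩
  set D := ∫ x in Ω, ∑ i, (Ψ i x)^2 with hDdef
  have hD : 0 < D := denom_pos hΩo hΨ hΨne
  set B := BformL Ω C Ψ Ψ with hBdef
  apply le_of_forall_pos_le_add
  intro δ hδ
  have hAint : IntegrableOn (fun x => ∑ i, 2 * |Ψ i x|) Ω :=
    aux_cont_cpt_integrableOn hΨ
      (continuous_finset_sum _ fun i _ => (continuous_const.mul ((hΨ i).1.continuous.abs)))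
      (fun x hx => Finset.sum_eq_zero fun i _ => by rw [hx i]; simp)
  set A := ∫ x in Ω, ∑ i, 2 * |Ψ i x| with hAdef
  have hA0 : 0 ≤ A := setIntegral_nonneg hΩo.measurableSet
    (fun x _ => Finset.sum_nonneg fun i _ => by positivity)
  set KE : Fin m → Fin m → ℝ := fun i j => if i = j then max (M' i i) 0 else max (M i j) 0
    with hKEdef
  have hKE0 : ∀ i j, 0 ≤ KE i j := by
    intro i j; rw [hKEdef]; dsimp only; split <;> exact le_max_right _ _
  set Efun : EuclN N → ℝ := fun x => ∑ i, ∑ j, KE i j * (|Ψ i x| + |Ψ j x|) with hEdef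
  have hEcont : Continuous Efun := by
    rw [hEdef]
    refine continuous_finset_sum _ fun i _ => continuous_finset_sum _ fun j _ => ?_
    exact continuous_const.mul (((hΨ i).1.continuous.abs).add ((hΨ j).1.continuous.abs))
  have hEnonneg : ∀ x, 0 ≤ Efun x := by
    intro x; rw [hEdef]
    refine Finset.sum_nonneg fun i _ => Finset.sum_nonneg fun j _ =>
      mul_nonneg (hKE0 i j) (by positivity)
  have hEint : IntegrableOn Efun Ω := by
    apply aux_cont_cpt_integrableOn hΨ hEcont
    intro x hx
    rw [hEdef]
    refine Finset.sum_eq_zero fun i _ => Finset.sum_eq_zero fun j _ => ?_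
    rw [hx i, hx j]; simp
  set Q := ∫ x in Ω, Efun x with hQdef
  have hQ0 : 0 ≤ Q := setIntegral_nonneg hΩo.measurableSet (fun x _ => hEnonneg x)
  set ε := min (D/(2*A+2)) (δ*D/(2*(Q + |B/D| *A + 1))) with hεdef
  have hεpos : 0 < ε := by
    apply lt_min
    · apply div_pos hD; linarith
    · apply div_pos (by positivity)
      have : 0 ≤ |B/D| *A := mul_nonneg (abs_nonneg _) hA0
      linarith
  set Φ : Fin m → EuclN N → ℝ := fun i y => phiE ε (Ψ i y) with hΦdef
  have hΦ : IsTestFun Ω Φ := phiE_comp_testfun hεpos hΨ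
  have hΦne : ∃ i x, Φ i x ≠ 0 := by
    obtain ⟨i₁, x₁, hx₁⟩ := hΨne
    exact ⟨i₁, x₁, phiE_ne_zero hεpos hx₁⟩
  set Dε := ∫ x in Ω, ∑ i, (Φ i x)^2 with hDεdef
  have hDεpos : 0 < Dε := denom_pos hΩo hΦ hΦne
  have hsq : ∀ i (x : EuclN N), (Ψ i x)^2 - ε * (2 * |Ψ i x|) ≤ (Φ i x)^2 ∧
      (Φ i x)^2 ≤ (Ψ i x)^2 :=
    fun i x => sq_le_sq_of_abs (Ψ i x) ε (Φ i x) hεpos.le (phiE_nonneg hεpos _)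
      (phiE_le_abs hεpos _) (abs_sub_le_phiE hεpos _)
  have hDεle : Dε ≤ D :=
    setIntegral_mono_on (aux_sumsq_integrableOn hΦ) (aux_sumsq_integrableOn hΨ)
      hΩo.measurableSet
      (fun x _ => Finset.sum_le_sum fun i _ => (hsq i x).2)
  have hDεge : D - ε * A ≤ Dε := by
    have hpt : ∀ x ∈ Ω, (∑ i, (Ψ i x)^2) - ε * (∑ i, 2*|Ψ i x|) ≤ ∑ i, (Φ i x)^2 := by
      intro x _
      have key : ∑ i, ((Ψ i x)^2 - ε * (2*|Ψ i x|)) ≤ ∑ i, (Φ i x)^2 :=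
        Finset.sum_le_sum fun i _ => (hsq i x).1
      calc (∑ i, (Ψ i x)^2) - ε * (∑ i, 2*|Ψ i x|)
          = ∑ i, ((Ψ i x)^2 - ε * (2*|Ψ i x|)) := by
            rw [Finset.mul_sum, ← Finset.sum_sub_distrib]
        _ ≤ ∑ i, (Φ i x)^2 := key
    have hint1 : IntegrableOn (fun x => (∑ i, (Ψ i x)^2) - ε * (∑ i, 2*|Ψ i x|)) Ω :=
      (aux_sumsq_integrableOn hΨ).sub ((hAint).const_mul ε)
    have h := setIntegral_mono_on hint1 (aux_sumsq_integrableOn hΦ) hΩo.measurableSet hpt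
    rwa [integral_sub (aux_sumsq_integrableOn hΨ) ((hAint).const_mul ε),
      integral_const_mul] at h
  -- numerator comparison
  have hBcomp : BformL Ω C' Φ Φ ≤ B + ε * Q := by
    have hcoop : ∀ i j, ∀ᵐ x ∂(volume : Measure (EuclN N)), x ∈ Ω → (i ≠ j → C i j x ≤ 0) := by
      intro i j
      by_cases hij : i = j
      · exact ae_of_all _ fun x _ h => absurd hij h
      · filter_upwards [hfull.1 i j hij] with x h1 hxΩ _
        exact h1 hxΩ
    have hpack : ∀ᵐ x ∂(volume : Measure (EuclN N)), ∀ i j, x ∈ Ω →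
        (C' i j x ≤ C i j x ∧ (i ≠ j → C i j x ≤ 0)) := by
      rw [ae_all_iff]; intro i; rw [ae_all_iff]; intro j
      filter_upwards [hge i j, hcoop i j] with x h1 h2 hxΩ
      exact ⟨h1 hxΩ, h2 hxΩ⟩
    have hint1 : IntegrableOn (fun x => (∑ i, ⟪gradient (Φ i) x, gradient (Φ i) x⟫) +
        ∑ i, ∑ j, C' i j x * Φ i x * Φ j x) Ω :=
      aux_core_integrableOn hΩo hΩb hmeas' hM' hΦ
    have hcore2 : IntegrableOn (fun x => (∑ i, ⟪gradient (Ψ i) x, gradient (Ψ i) x⟫) +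
        ∑ i, ∑ j, C i j x * Ψ i x * Ψ j x) Ω :=
      aux_core_integrableOn hΩo hΩb hmeas hM hΨ
    have hint2 : IntegrableOn (fun x => ((∑ i, ⟪gradient (Ψ i) x, gradient (Ψ i) x⟫) +
        ∑ i, ∑ j, C i j x * Ψ i x * Ψ j x) + ε * Efun x) Ω :=
      hcore2.add (hEint.const_mul ε)
    have hae : (fun x => (∑ i, ⟪gradient (Φ i) x, gradient (Φ i) x⟫) +
        ∑ i, ∑ j, C' i j x * Φ i x * Φ j x) ≤ᵐ[volume.restrict Ω]
        (fun x => ((∑ i, ⟪gradient (Ψ i) x, gradient (Ψ i) x⟫) +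
        ∑ i, ∑ j, C i j x * Ψ i x * Ψ j x) + ε * Efun x) := by
      apply (ae_restrict_iff' hΩo.measurableSet).2
      filter_upwards [hpack] with x hx hxΩ
      have hgrad : ∑ i, ⟪gradient (Φ i) x, gradient (Φ i) x⟫ ≤
          ∑ i, ⟪gradient (Ψ i) x, gradient (Ψ i) x⟫ :=
        Finset.sum_le_sum fun i _ => phiE_comp_grad_le (hΨ i).1 hεpos x
      have hCsum : ∑ i, ∑ j, C' i j x * Φ i x * Φ j x ≤
          ∑ i, ∑ j, (C i j x * Ψ i x * Ψ j x + ε * (KE i j * (|Ψ i x| + |Ψ j x|))) := by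
        refine Finset.sum_le_sum fun i _ => Finset.sum_le_sum fun j _ => ?_
        by_cases hij : i = j
        · subst hij
          have hle := lemDiag (C' i i x) (C i i x) (max (M' i i) 0) (Ψ i x) ε (Φ i x)
            (hx i i hxΩ).1 ((hM' i i x hxΩ).trans (le_max_left _ _)) hεpos.le
            (phiE_nonneg hεpos _) (phiE_le_abs hεpos _) (abs_sub_le_phiE hεpos _)
          have hKEii : KE i i = max (M' i i) 0 := by rw [hKEdef]; simp
          rw [hKEii]
          exact hle
        · have hle := lemOff (C' i j x) (C i j x) (max (M i j) 0) (Ψ i x) (Ψ j x) ε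
            (Φ i x) (Φ j x)
            (hx i j hxΩ).1 ((hx i j hxΩ).2 hij) ((hM i j x hxΩ).trans (le_max_left _ _))
            hεpos.le
            (phiE_nonneg hεpos _) (phiE_le_abs hεpos _) (abs_sub_le_phiE hεpos _)
            (phiE_nonneg hεpos _) (phiE_le_abs hεpos _) (abs_sub_le_phiE hεpos _)
          have hKEij : KE i j = max (M i j) 0 := by rw [hKEdef]; simp [hij]
          rw [hKEij]
          exact hle
      have hEdecomp : ∑ i, ∑ j, (C i j x * Ψ i x * Ψ j x + ε * (KE i j * (|Ψ i x| + |Ψ j x|)))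
          = (∑ i, ∑ j, C i j x * Ψ i x * Ψ j x) + ε * Efun x := by
        rw [hEdef]
        simp only [Finset.sum_add_distrib, Finset.mul_sum]
      rw [hEdecomp] at hCsum
      linarith
    have hfin := integral_mono_ae hint1 hint2 hae
    rw [integral_add hcore2 (hEint.const_mul ε), integral_const_mul] at hfin
    unfold BformL
    rw [hBdef]
    unfold BformL
    rw [hQdef]
    exact hfin
  -- conclusion
  have hmem : BformL Ω C' Φ Φ / Dε ∈ S' := ⟨Φ, hΦ, hΦne, rfl⟩
  have hle1 : sInf S' ≤ BformL Ω C' Φ Φ / Dε := csInf_le hBddS' hmem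
  have harith : BformL Ω C' Φ Φ / Dε ≤ B / D + δ := by
    have hε1 : ε * (2*A+2) ≤ D := by
      have h2 : ε ≤ D/(2*A+2) := min_le_left _ _
      rw [le_div_iff₀ (by linarith : (0:ℝ) < 2*A+2)] at h2
      calc ε * (2*A+2) ≤ (D/(2*A+2)) * (2*A+2) := by
            apply mul_le_mul_of_nonneg_right (min_le_left _ _) (by linarith)
        _ = D := div_mul_cancel₀ D (by linarith : (2*A+2 : ℝ) ≠ 0)
    have hε2 : ε * (2*(Q + |B/D| * A + 1)) ≤ δ * D := by
      have hpos : (0:ℝ) < 2*(Q + |B/D| * A + 1) := by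
        have : 0 ≤ |B/D| * A := mul_nonneg (abs_nonneg _) hA0
        linarith
      calc ε * (2*(Q + |B/D| * A + 1))
          ≤ (δ*D/(2*(Q + |B/D| * A + 1))) * (2*(Q + |B/D| * A + 1)) := by
            apply mul_le_mul_of_nonneg_right (min_le_right _ _) hpos.le
        _ = δ * D := div_mul_cancel₀ _ hpos.ne'
    exact lemFinal _ B D Dε A Q δ ε hD hδ hA0 hQ0 hεpos hDεpos hDεle hDεge hBcomp hε1 hε2
  linarith [hle1, harith]
end

section
/- (Linear system satisfied by the reflected difference.) Let Ω be an open ball or annulus centered at the origin in ℝ^N, N ≥ 2, and let U ∈ C²(Ω̄;ℝ^m) solve −Δu_i = f_i(|x|,U) in Ω, u_i = 0 on ∂Ω, where F satisfies: (i) the system is fully coupled along U in Ω(e) for every e ∈ S^{N−1}; (ii) each (∂f_i/∂u_j)(|x|,u_1,…,u_m) is nondecreasing in each variable u_k; (iii) if m ≥ 3, each f_i(|x|,u_1,…,u_m) = Σ_{k≠i} g_{ik}(|x|,u_i,u_k) with g_{ik} ∈ C^{1,α}. Then for every direction e ∈ S^{N−1} there exists a continuous matrix-valued function B_e = (b_ij)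 : Ω → ℝ^{m×m} such that the difference W^e = U − U^{σ_e} = (w_1,…,w_m) satisfies −Δw_i + Σ_j b_ij(x) w_j = 0 in Ω for every i, with the following properties for all i,j and x ∈ Ω: b_ij(x) ≤ 0 whenever i ≠ j; b_ii(x) ≥ −(∂f_i/∂u_i)(|x|,U(x)) whenever u_i(x) ≥ u_i^{σ_e}(x); for i ≠ j, b_ij(x) ≥ −(∂f_i/∂u_j)(|x|,U(x)) whenever u_i(x) ≥ u_i^{σ_e}(x) and u_j(x) ≥ u_j^{σ_e}(x); and b_ij(x) = −(∂f_i/∂u_j)(|x|,U(x)) whenever u_i(x) = u_i^{σ_e}(x) and u_j(x) = u_j^{σ_e}(x). Moreover the linear system −ΔW + B_e(x)W = 0 is fully coupled in Ω(e), i.e. for every partition of {1,…,m} into nonempty disjoint sets I, J there exist i₀ ∈ I, j₀ ∈ J with meas({x ∈ Ω(e) : b_{i₀j₀}(x) < 0}) > 0. -/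
open MeasureTheory Real Set
open scoped RealInnerProductSpace ENNReal

noncomputable section AuxLemmas

/-- FTC along a line segment. -/
lemma ftc_line {E' : Type*} [NormedAddCommGroup E'] [NormedSpace ℝ E']
    (g : E' → ℝ) (hg : ContDiff ℝ 1 g) (a v : E') :
    g (a + v) - g a = ∫ l in (0:ℝ)..1, fderiv ℝ g (a + l • v) v := by
  have hderiv : ∀ l ∈ Set.uIcc (0:ℝ) 1,
      HasDerivAt (fun t : ℝ => g (a + t • v)) (fderiv ℝ g (a + l • v) v) l := by
    intro l _
    have h1 : HasFDerivAt g (fderiv ℝ g (a + l • v)) (a + l • v) :=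
      (hg.differentiable one_ne_zero (a + l • v)).hasFDerivAt
    have h2 : HasDerivAt (fun t : ℝ => a + t • v) v l := by
      simpa using ((hasDerivAt_id l).smul_const v).const_add a
    exact (h1.comp_hasDerivAt l h2)
  have hint : IntervalIntegrable (fun l : ℝ => fderiv ℝ g (a + l • v) v)
      MeasureTheory.volume 0 1 := by
    apply Continuous.intervalIntegrable
    exact ((hg.continuous_fderiv one_ne_zero).comp (by continuity)).clm_apply continuous_const
  have h := intervalIntegral.integral_eq_sub_of_hasDerivAt hderiv hint
  rw [h]; simp

/-- A nonnegative continuous function positive at `0` has positive integral on `[0,1]`. -/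
lemma ii_pos (h : ℝ → ℝ) (hc : Continuous h) (hnn : ∀ l, 0 ≤ h l) (h0 : 0 < h 0) :
    0 < ∫ l in (0:ℝ)..1, h l := by
  obtain ⟨ε, hε, hev⟩ := Metric.eventually_nhds_iff.mp
    ((hc.continuousAt (x := 0)).eventually_const_lt (half_lt_self h0))
  set d : ℝ := min (ε / 2) 1 with hd
  have hd0 : 0 < d := lt_min (half_pos hε) one_pos
  have hd1 : d ≤ 1 := min_le_right _ _
  have hsplit : (∫ l in (0:ℝ)..d, h l) + (∫ l in d..1, h l) = ∫ l in (0:ℝ)..1, h l :=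
    intervalIntegral.integral_add_adjacent_intervals (hc.intervalIntegrable _ _)
      (hc.intervalIntegrable _ _)
  have h1 : (h 0 * d / 2) ≤ ∫ l in (0:ℝ)..d, h l := by
    have := intervalIntegral.integral_mono_on (f := fun _ : ℝ => h 0 / 2) (g := h) hd0.le
      (intervalIntegrable_const (μ := volume)) (hc.intervalIntegrable _ _) (fun x hx => by
        refine (hev (y := x) ?_).le
        rw [Real.dist_eq, sub_zero, abs_of_nonneg hx.1]
        exact lt_of_le_of_lt (hx.2.trans (min_le_left _ _)) (half_lt_self hε))
    simpa [mul_comm, mul_div_assoc, div_mul_eq_mul_div] using this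
  have h2 : (0:ℝ) ≤ ∫ l in d..1, h l :=
    intervalIntegral.integral_nonneg hd1 (fun u _ => hnn u)
  nlinarith [mul_pos hd0 (half_pos h0)]

section PD
variable {m : ℕ} (f : ℝ → (Fin m → ℝ) → ℝ)

lemma slice_contDiff (hf : ContDiff ℝ 1 (fun q : ℝ × (Fin m → ℝ) => f q.1 q.2)) (r : ℝ) : ContDiff ℝ 1 (f r) :=
  hf.comp (contDiff_const.prodMk contDiff_id)

lemma pd_fderiv (hf : ContDiff ℝ 1 (fun q : ℝ × (Fin m → ℝ) => f q.1 q.2)) (j : Fin m) (r : ℝ) (s : Fin m → ℝ) :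
    pd f j r s = fderiv ℝ (fun q : ℝ × (Fin m → ℝ) => f q.1 q.2) (r, s)
      ((0 : ℝ), Pi.single j 1) := by
  have hmk : HasFDerivAt (fun s : Fin m → ℝ => ((r : ℝ), s))
      ((0 : (Fin m → ℝ) →L[ℝ] ℝ).prod (ContinuousLinearMap.id ℝ (Fin m → ℝ))) s :=
    HasFDerivAt.prodMk (hasFDerivAt_const r s) (hasFDerivAt_id s)
  have hcomp : fderiv ℝ (f r) s = (fderiv ℝ (fun q : ℝ × (Fin m → ℝ) => f q.1 q.2) (r, s)).comp
      ((0 : (Fin m → ℝ) →L[ℝ] ℝ).prod (ContinuousLinearMap.id ℝ (Fin m → ℝ))) := by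
    rw [← hmk.fderiv]
    exact fderiv_comp s (hf.differentiable one_ne_zero (r, s)) hmk.differentiableAt
  rw [pd, hcomp]; rfl

lemma pd_cont (hf : ContDiff ℝ 1 (fun q : ℝ × (Fin m → ℝ) => f q.1 q.2)) (j : Fin m) :
    Continuous (fun q : ℝ × (Fin m → ℝ) => pd f j q.1 q.2) := by
  have : (fun q : ℝ × (Fin m → ℝ) => pd f j q.1 q.2) =
      fun q : ℝ × (Fin m → ℝ) =>
        fderiv ℝ (fun q : ℝ × (Fin m → ℝ) => f q.1 q.2) q ((0 : ℝ), Pi.single j 1) := by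
    funext q; exact pd_fderiv f hf j q.1 q.2
  rw [this]
  exact (hf.continuous_fderiv one_ne_zero).clm_apply continuous_const

end PD

section Refl
variable {N : ℕ}

def reflCLM (e : EuclN N) : EuclN N →L[ℝ] EuclN N :=
  ContinuousLinearMap.id ℝ _ - (2:ℝ) • ((innerSL ℝ e).smulRight e)

lemma reflCLM_apply (e x : EuclN N) : reflCLM e x = reflPt e x := by
  simp [reflCLM, reflPt, ContinuousLinearMap.smul_apply, smul_smul, real_inner_comm]

lemma inner_reflPt_left (e x y : EuclN N) : ⟪reflPt e x, y⟫ = ⟪x, reflPt e y⟫ := by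
  simp only [reflPt, inner_sub_left, inner_sub_right, real_inner_smul_left,
    real_inner_smul_right]
  rw [real_inner_comm e y]
  ring

lemma inner_reflPt (e : EuclN N) (he : ‖e‖ = 1) (x y : EuclN N) :
    ⟪reflPt e x, reflPt e y⟫ = ⟪x, y⟫ := by
  have hee : ⟪e, e⟫ = (1:ℝ) := by
    rw [real_inner_self_eq_norm_mul_norm, he]; norm_num
  simp only [reflPt, inner_sub_left, inner_sub_right, real_inner_smul_left,
    real_inner_smul_right, hee]
  rw [real_inner_comm e y]
  ring

lemma norm_reflPt (e : EuclN N) (he : ‖e‖ = 1) (x : EuclN N) : ‖reflPt e x‖ = ‖x‖ := by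
  have h := inner_reflPt e he x x
  rw [real_inner_self_eq_norm_mul_norm, real_inner_self_eq_norm_mul_norm] at h
  exact (mul_self_inj (norm_nonneg _) (norm_nonneg _)).mp h

lemma inner_reflPt_e (e : EuclN N) (he : ‖e‖ = 1) (x : EuclN N) :
    ⟪reflPt e x, e⟫ = -⟪x, e⟫ := by
  have hee : ⟪e, e⟫ = (1:ℝ) := by
    rw [real_inner_self_eq_norm_mul_norm, he]; norm_num
  simp only [reflPt, inner_sub_left, real_inner_smul_left, hee]
  ring

lemma reflPt_invol (e : EuclN N) (he : ‖e‖ = 1) (x : EuclN N) :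
    reflPt e (reflPt e x) = x := by
  rw [reflPt, inner_reflPt_e e he x]
  rw [reflPt]
  module

def reflLIE (e : EuclN N) (he : ‖e‖ = 1) : EuclN N ≃ₗᵢ[ℝ] EuclN N :=
  { LinearEquiv.ofInvolutive
      ((reflCLM e).toLinearMap) (fun x => by
        simp only [ContinuousLinearMap.coe_coe, reflCLM_apply]
        exact reflPt_invol e he x) with
    norm_map' := fun x => by
      simp only [LinearEquiv.coe_mk, LinearEquiv.ofInvolutive]
      show ‖reflCLM e x‖ = ‖x‖
      rw [reflCLM_apply]; exact norm_reflPt e he x }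

lemma reflLIE_apply (e : EuclN N) (he : ‖e‖ = 1) (x : EuclN N) :
    reflLIE e he x = reflPt e x := by
  show reflCLM e x = reflPt e x
  exact reflCLM_apply e x

lemma reflPt_continuous (e : EuclN N) : Continuous (reflPt e) := by
  have : reflPt e = fun x => reflCLM e x := by funext x; rw [reflCLM_apply]
  rw [this]; exact (reflCLM e).continuous

end Refl

section Trace
variable {N : ℕ}

lemma sum_bilin_refl (e : EuclN N) (he : ‖e‖ = 1) (H : EuclN N →L[ℝ] EuclN N →L[ℝ] ℝ) :
    ∑ i : Fin N, H (reflPt e (EuclideanSpace.single i 1)) (reflPt e (EuclideanSpace.single i 1))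
      = ∑ i : Fin N, H (EuclideanSpace.single i 1) (EuclideanSpace.single i 1) := by
  classical
  set b : OrthonormalBasis (Fin N) ℝ (EuclN N) := EuclideanSpace.basisFun (Fin N) ℝ with hb
  set c : OrthonormalBasis (Fin N) ℝ (EuclN N) := b.map (reflLIE e he) with hc
  have hcb : ∀ i, c i = reflPt e (b i) := by
    intro i; rw [hc, OrthonormalBasis.map_apply, reflLIE_apply]
  have h1 : ∀ u v : EuclN N, H u v = ∑ j, ⟪b j, u⟫ * H (b j) v := by
    intro u v
    conv_lhs => rw [← b.sum_repr' u]
    rw [map_sum, ContinuousLinearMap.sum_apply]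
    refine Finset.sum_congr rfl fun j _ => ?_
    rw [H.map_smul, ContinuousLinearMap.smul_apply, smul_eq_mul]
  have h2 : ∀ (j : Fin N) (v : EuclN N), H (b j) v = ∑ k, ⟪b k, v⟫ * H (b j) (b k) := by
    intro j v
    conv_lhs => rw [← b.sum_repr' v]
    rw [map_sum]
    refine Finset.sum_congr rfl fun k _ => ?_
    rw [(H (b j)).map_smul, smul_eq_mul]
  have hexp : ∀ a : EuclN N, H a a = ∑ j, ∑ k, ⟪b j, a⟫ * (⟪b k, a⟫ * H (b j) (b k)) := by
    intro a
    rw [h1 a a]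
    refine Finset.sum_congr rfl fun j _ => ?_
    rw [h2 j a, Finset.mul_sum]
  have hsa : ∀ j i, ⟪b j, c i⟫ = ⟪b i, c j⟫ := by
    intro j i
    rw [hcb, hcb]
    conv_lhs => rw [← inner_reflPt_left e (b j) (b i)]
    exact real_inner_comm _ _
  have hpar : ∀ j k, (∑ i, ⟪b j, c i⟫ * ⟪b k, c i⟫) = if j = k then (1:ℝ) else 0 := by
    intro j k
    have : ∀ i, ⟪b j, c i⟫ * ⟪b k, c i⟫ = ⟪c j, b i⟫ * ⟪b i, c k⟫ := by
      intro i
      rw [hsa j i, hsa k i, real_inner_comm (b i) (c j)]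
    rw [Finset.sum_congr rfl fun i _ => this i, b.sum_inner_mul_inner,
      hcb, hcb, inner_reflPt e he]
    have := b.orthonormal
    rw [orthonormal_iff_ite] at this
    exact this j k
  calc
    ∑ i : Fin N, H (reflPt e (EuclideanSpace.single i 1)) (reflPt e (EuclideanSpace.single i 1))
        = ∑ i, H (c i) (c i) := by
          refine Finset.sum_congr rfl fun i _ => ?_
          rw [hcb, hb]
          rw [EuclideanSpace.basisFun_apply]
    _ = ∑ i, ∑ j, ∑ k, ⟪b j, c i⟫ * (⟪b k, c i⟫ * H (b j) (b k)) :=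
          Finset.sum_congr rfl fun i _ => hexp (c i)
    _ = ∑ j, ∑ k, (∑ i, ⟪b j, c i⟫ * ⟪b k, c i⟫) * H (b j) (b k) := by
          rw [Finset.sum_comm]
          refine Finset.sum_congr rfl fun j _ => ?_
          rw [Finset.sum_comm]
          refine Finset.sum_congr rfl fun k _ => ?_
          rw [Finset.sum_mul]
          exact Finset.sum_congr rfl fun i _ => by ring
    _ = ∑ j, H (b j) (b j) := by
          refine Finset.sum_congr rfl fun j _ => ?_
          rw [Finset.sum_eq_single j]
          · rw [hpar, if_pos rfl, one_mul]
          · intro k _ hk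
            rw [hpar, if_neg (Ne.symm hk), zero_mul]
          · intro h; exact absurd (Finset.mem_univ j) h
    _ = ∑ i : Fin N, H (EuclideanSpace.single i 1) (EuclideanSpace.single i 1) := by
          refine Finset.sum_congr rfl fun j _ => ?_
          rw [hb, EuclideanSpace.basisFun_apply]

end Trace

section Lap
variable {N : ℕ}

lemma lap_eq_sum (u : EuclN N → ℝ) (x : EuclN N) :
    lap u x = ∑ i : Fin N, fderiv ℝ (fderiv ℝ u) x (EuclideanSpace.single i 1)
      (EuclideanSpace.single i 1) := by
  unfold lap
  refine Finset.sum_congr rfl fun i _ => ?_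
  rw [iteratedFDeriv_two_apply]
  simp

lemma lap_refl_sub (e : EuclN N) (he : ‖e‖ = 1) (Ω : Set (EuclN N)) (hΩo : IsOpen Ω)
    (hΩr : ∀ y ∈ Ω, reflPt e y ∈ Ω) (u : EuclN N → ℝ) (hu : ContDiffOn ℝ 2 u Ω)
    {x : EuclN N} (hx : x ∈ Ω) :
    lap (fun y => u y - u (reflPt e y)) x = lap u x - lap u (reflPt e x) := by
  classical
  set L : EuclN N →L[ℝ] EuclN N := reflCLM e with hL
  have hLapp : ∀ y, L y = reflPt e y := reflCLM_apply e
  have hca : ∀ y ∈ Ω, ContDiffAt ℝ 2 u y := fun y hy => hu.contDiffAt (hΩo.mem_nhds hy)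
  have hd1 : ∀ y ∈ Ω, DifferentiableAt ℝ u y := fun y hy =>
    (hca y hy).differentiableAt (by norm_num)
  set Φ : (EuclN N →L[ℝ] ℝ) →L[ℝ] (EuclN N →L[ℝ] ℝ) :=
    (ContinuousLinearMap.compL ℝ (EuclN N) (EuclN N) ℝ).flip L with hΦ
  have hΦapp : ∀ (A : EuclN N →L[ℝ] ℝ), Φ A = A.comp L := fun A => rfl
  have hfd : ∀ y ∈ Ω, fderiv ℝ (fun z => u z - u (reflPt e z)) y
      = fderiv ℝ u y - Φ (fderiv ℝ u (L y)) := by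
    intro y hy
    have hmem : L y ∈ Ω := by rw [hLapp]; exact hΩr y hy
    have hdo : DifferentiableAt ℝ u (L y) := hd1 _ hmem
    have hcompfun : (fun z => u (reflPt e z)) = u ∘ L := by
      funext z; simp [hLapp]
    have hdc : DifferentiableAt ℝ (fun z => u (reflPt e z)) y := by
      rw [hcompfun]; exact hdo.comp y L.differentiableAt
    have hcomp : fderiv ℝ (fun z => u (reflPt e z)) y = (fderiv ℝ u (L y)).comp L := by
      rw [hcompfun, fderiv_comp y hdo L.differentiableAt, L.fderiv]
    rw [fderiv_fun_sub (hd1 y hy) hdc, hcomp, hΦapp]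
  have hev : (fun y => fderiv ℝ (fun z => u z - u (reflPt e z)) y)
      =ᶠ[nhds x] fun y => fderiv ℝ u y - Φ (fderiv ℝ u (L y)) :=
    Filter.eventuallyEq_of_mem (hΩo.mem_nhds hx) hfd
  have hLx : L x ∈ Ω := by rw [hLapp]; exact hΩr x hx
  have hdf : DifferentiableAt ℝ (fderiv ℝ u) x :=
    ((hca x hx).fderiv_right (m := 1) (le_refl 2)).differentiableAt one_ne_zero
  have hdfL : DifferentiableAt ℝ (fderiv ℝ u) (L x) :=
    ((hca _ hLx).fderiv_right (m := 1) (le_refl 2)).differentiableAt one_ne_zero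
  have h1 : HasFDerivAt (fun y => fderiv ℝ u (L y))
      ((fderiv ℝ (fderiv ℝ u) (L x)).comp L) x :=
    (hdfL.hasFDerivAt).comp x L.hasFDerivAt
  have h2 : HasFDerivAt (fun y => Φ (fderiv ℝ u (L y)))
      (Φ.comp ((fderiv ℝ (fderiv ℝ u) (L x)).comp L)) x :=
    (Φ.hasFDerivAt.comp x h1)
  have hfd2 : fderiv ℝ (fderiv ℝ (fun z => u z - u (reflPt e z))) x
      = fderiv ℝ (fderiv ℝ u) x - Φ.comp ((fderiv ℝ (fderiv ℝ u) (L x)).comp L) := by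
    rw [hev.fderiv_eq, fderiv_fun_sub hdf h2.differentiableAt, h2.fderiv]
  rw [lap_eq_sum, lap_eq_sum, lap_eq_sum, hfd2]
  have heval : ∀ i : Fin N,
      (fderiv ℝ (fderiv ℝ u) x - Φ.comp ((fderiv ℝ (fderiv ℝ u) (L x)).comp L))
        (EuclideanSpace.single i 1) (EuclideanSpace.single i 1)
      = fderiv ℝ (fderiv ℝ u) x (EuclideanSpace.single i 1) (EuclideanSpace.single i 1)
        - fderiv ℝ (fderiv ℝ u) (L x) (reflPt e (EuclideanSpace.single i 1))
            (reflPt e (EuclideanSpace.single i 1)) := by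
    intro i
    rw [ContinuousLinearMap.sub_apply, ContinuousLinearMap.sub_apply]
    congr 1
    rw [ContinuousLinearMap.comp_apply, hΦapp, ContinuousLinearMap.comp_apply,
      ContinuousLinearMap.comp_apply, hLapp, hLapp]
  calc ∑ i : Fin N, (fderiv ℝ (fderiv ℝ u) x
        - Φ.comp ((fderiv ℝ (fderiv ℝ u) (L x)).comp L))
          (EuclideanSpace.single i 1) (EuclideanSpace.single i 1)
      = ∑ i : Fin N, (fderiv ℝ (fderiv ℝ u) x (EuclideanSpace.single i 1)
          (EuclideanSpace.single i 1)
        - fderiv ℝ (fderiv ℝ u) (L x) (reflPt e (EuclideanSpace.single i 1))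
            (reflPt e (EuclideanSpace.single i 1))) :=
        Finset.sum_congr rfl fun i _ => heval i
    _ = _ := by
        rw [Finset.sum_sub_distrib]
        congr 1
        rw [sum_bilin_refl e he]
        refine Finset.sum_congr rfl fun i _ => ?_
        rw [hLapp]

end Lap

def pathp {m : ℕ} (i j : Fin m) (s t : Fin m → ℝ) (l : ℝ) : Fin m → ℝ :=
  if i = j then Function.update s i (t i + l * (s i - t i))
  else Function.update (Function.update s i (t i)) j (t j + l * (s j - t j))

section Key
variable {m : ℕ}

lemma pathp_continuous (i j : Fin m) (s t : Fin m → ℝ) :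
    Continuous (fun l : ℝ => pathp i j s t l) := by
  classical
  unfold pathp
  split_ifs with h
  · refine continuous_pi fun k => ?_
    simp only [Function.update_apply]
    split_ifs with hk
    · fun_prop
    · exact continuous_const
  · refine continuous_pi fun k => ?_
    simp only [Function.update_apply]
    split_ifs with hk hk'
    · fun_prop
    · exact continuous_const
    · exact continuous_const

lemma key_m2 (hm : 2 ≤ m) (hm' : m < 3) (f : ℝ → (Fin m → ℝ) → ℝ)
    (hf : ContDiff ℝ 1 (fun q : ℝ × (Fin m → ℝ) => f q.1 q.2)) (i : Fin m) (r : ℝ)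
    (s t : Fin m → ℝ) :
    f r s - f r t = ∑ j, (∫ l in (0:ℝ)..1, pd f j r (pathp i j s t l)) * (s j - t j) := by
  classical
  have hm2 : m = 2 := by omega
  have : Nontrivial (Fin m) := Fin.nontrivial_iff_two_le.mpr hm
  obtain ⟨j, hj⟩ := exists_ne i
  have hall : ∀ k : Fin m, k ≠ i → k = j := by
    intro k hk
    by_contra hkj
    have h1 : k.val ≠ i.val := fun h => hk (Fin.val_injective h)
    have h2 : k.val ≠ j.val := fun h => hkj (Fin.val_injective h)
    have h3 : j.val ≠ i.val := fun h => hj (Fin.val_injective h)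
    have := k.isLt; have := i.isLt; have := j.isLt
    omega
  have huniv : (Finset.univ : Finset (Fin m)) = {i, j} := by
    ext k
    simp only [Finset.mem_univ, true_iff, Finset.mem_insert, Finset.mem_singleton]
    by_cases hk : k = i
    · exact Or.inl hk
    · exact Or.inr (hall k hk)
  have hgc : ContDiff ℝ 1 (f r) := slice_contDiff f hf r
  set a1 : Fin m → ℝ := Function.update s i (t i) with ha1
  -- diagonal term
  have hti : (∫ l in (0:ℝ)..1, pd f i r (pathp i i s t l)) * (s i - t i)
      = f r s - f r a1 := by
    have hend : a1 + (s i - t i) • (Pi.single i (1:ℝ) : Fin m → ℝ) = s := by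
      funext k
      simp only [Pi.add_apply, Pi.smul_apply, Pi.single_apply, Function.update_apply, ha1,
        smul_eq_mul]
      by_cases hk : k = i
      · subst hk; simp; try ring
      · simp [hk]
    have hpath : ∀ l : ℝ, a1 + l • ((s i - t i) • (Pi.single i (1:ℝ) : Fin m → ℝ)) = pathp i i s t l := by
      intro l
      funext k
      simp only [Pi.add_apply, Pi.smul_apply, Pi.single_apply, Function.update_apply, ha1,
        smul_eq_mul, pathp, if_pos rfl]
      by_cases hk : k = i
      · subst hk; simp; try ring
      · simp [hk]
    have hftc := ftc_line (f r) hgc a1 ((s i - t i) • (Pi.single i (1:ℝ) : Fin m → ℝ))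
    rw [hend] at hftc
    have hint : (∫ l in (0:ℝ)..1, fderiv ℝ (f r) (a1 + l • ((s i - t i) • (Pi.single i (1:ℝ) : Fin m → ℝ)))
        ((s i - t i) • (Pi.single i (1:ℝ) : Fin m → ℝ)))
        = (s i - t i) * ∫ l in (0:ℝ)..1, pd f i r (pathp i i s t l) := by
      rw [← intervalIntegral.integral_const_mul]
      refine intervalIntegral.integral_congr fun l _ => ?_
      rw [hpath l, _root_.map_smul (fderiv ℝ (f r) (pathp i i s t l)), smul_eq_mul]
      rfl
    rw [hint] at hftc
    rw [mul_comm, ← hftc]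
  -- off-diagonal term
  have hij : ¬ (i = j) := fun h => hj h.symm
  set a2 : Fin m → ℝ := Function.update a1 j (t j) with ha2
  have htj : (∫ l in (0:ℝ)..1, pd f j r (pathp i j s t l)) * (s j - t j)
      = f r a1 - f r t := by
    have hend : a2 + (s j - t j) • (Pi.single j (1:ℝ) : Fin m → ℝ) = a1 := by
      funext k
      simp only [Pi.add_apply, Pi.smul_apply, Pi.single_apply, Function.update_apply, ha2,
        smul_eq_mul]
      by_cases hk : k = j
      · subst hk; simp [ha1, Function.update_apply, hij, hj]; try ring
      · simp [hk]
    have hpath : ∀ l : ℝ, a2 + l • ((s j - t j) • (Pi.single j (1:ℝ) : Fin m → ℝ)) = pathp i j s t l := by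
      intro l
      funext k
      simp only [Pi.add_apply, Pi.smul_apply, Pi.single_apply, Function.update_apply, ha2, ha1,
        smul_eq_mul, pathp, if_neg hij]
      by_cases hk : k = j
      · subst hk; simp; try ring
      · simp [hk]
    have ha2t : a2 = t := by
      funext k
      by_cases hk : k = i
      · subst hk; simp [ha2, ha1, Function.update_apply, hij]
      · have : k = j := hall k hk
        subst this; simp [ha2]
    have hftc := ftc_line (f r) hgc a2 ((s j - t j) • (Pi.single j (1:ℝ) : Fin m → ℝ))
    rw [hend] at hftc
    have hint : (∫ l in (0:ℝ)..1, fderiv ℝ (f r) (a2 + l • ((s j - t j) • (Pi.single j (1:ℝ) : Fin m → ℝ)))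
        ((s j - t j) • (Pi.single j (1:ℝ) : Fin m → ℝ)))
        = (s j - t j) * ∫ l in (0:ℝ)..1, pd f j r (pathp i j s t l) := by
      rw [← intervalIntegral.integral_const_mul]
      refine intervalIntegral.integral_congr fun l _ => ?_
      rw [hpath l, _root_.map_smul (fderiv ℝ (f r) (pathp i j s t l)), smul_eq_mul]
      rfl
    rw [hint] at hftc
    rw [mul_comm, ← hftc, ha2t]
  rw [huniv, Finset.sum_insert (by simp [hij]), Finset.sum_singleton, hti, htj]
  ring

end Key

section Decomp
variable {m : ℕ}

lemma G_contDiff (g : Fin m → ℝ → ℝ → ℝ → ℝ)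
    (hg : ∀ k, ContDiff ℝ 1 fun q : ℝ × ℝ × ℝ => g k q.1 q.2.1 q.2.2) (k : Fin m) (r : ℝ) :
    ContDiff ℝ 1 (fun p : ℝ × ℝ => g k r p.1 p.2) :=
  (hg k).comp (contDiff_const.prodMk contDiff_id)

lemma pd_decomp_eq (f : ℝ → (Fin m → ℝ) → ℝ) (i : Fin m) (g : Fin m → ℝ → ℝ → ℝ → ℝ)
    (hg : ∀ k, ContDiff ℝ 1 fun q : ℝ × ℝ × ℝ => g k q.1 q.2.1 q.2.2)
    (hrep : ∀ (r : ℝ) (s : Fin m → ℝ), f r s = ∑ k ∈ Finset.univ.erase i, g k r (s i) (s k))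
    (j : Fin m) (r : ℝ) (y : Fin m → ℝ) :
    pd f j r y = ∑ k ∈ Finset.univ.erase i,
      fderiv ℝ (fun p : ℝ × ℝ => g k r p.1 p.2) (y i, y k)
        (((Pi.single j (1:ℝ) : Fin m → ℝ) i), ((Pi.single j (1:ℝ) : Fin m → ℝ) k)) := by
  classical
  have hfr : f r = fun y : Fin m → ℝ => ∑ k ∈ Finset.univ.erase i,
      (fun p : ℝ × ℝ => g k r p.1 p.2) ((y i, y k) : ℝ × ℝ) := by
    funext y; exact hrep r y
  have hterm : ∀ k : Fin m, HasFDerivAt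
      (fun y : Fin m → ℝ => (fun p : ℝ × ℝ => g k r p.1 p.2) ((y i, y k) : ℝ × ℝ))
      ((fderiv ℝ (fun p : ℝ × ℝ => g k r p.1 p.2) (y i, y k)).comp
        ((ContinuousLinearMap.proj (R := ℝ) (φ := fun _ : Fin m => ℝ) i).prod
          (ContinuousLinearMap.proj k))) y := by
    intro k
    have hA : HasFDerivAt (fun y : Fin m → ℝ => ((y i, y k) : ℝ × ℝ))
        ((ContinuousLinearMap.proj (R := ℝ) (φ := fun _ : Fin m => ℝ) i).prod
          (ContinuousLinearMap.proj k)) y :=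
      ((ContinuousLinearMap.proj (R := ℝ) (φ := fun _ : Fin m => ℝ) i).prod
          (ContinuousLinearMap.proj k)).hasFDerivAt
    exact (((G_contDiff g hg k r).differentiable one_ne_zero _).hasFDerivAt).comp y hA
  have hsum : HasFDerivAt (f r)
      (∑ k ∈ Finset.univ.erase i,
        ((fderiv ℝ (fun p : ℝ × ℝ => g k r p.1 p.2) (y i, y k)).comp
          ((ContinuousLinearMap.proj (R := ℝ) (φ := fun _ : Fin m => ℝ) i).prod
            (ContinuousLinearMap.proj k)))) y := by
    rw [hfr]
    exact HasFDerivAt.fun_sum fun k _ => hterm k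
  rw [pd, hsum.fderiv, ContinuousLinearMap.sum_apply]
  rfl

lemma pd_decomp_offdiag (f : ℝ → (Fin m → ℝ) → ℝ) (i : Fin m) (g : Fin m → ℝ → ℝ → ℝ → ℝ)
    (hg : ∀ k, ContDiff ℝ 1 fun q : ℝ × ℝ × ℝ => g k q.1 q.2.1 q.2.2)
    (hrep : ∀ (r : ℝ) (s : Fin m → ℝ), f r s = ∑ k ∈ Finset.univ.erase i, g k r (s i) (s k))
    (j : Fin m) (hij : j ≠ i) (r : ℝ) (y : Fin m → ℝ) :
    pd f j r y = fderiv ℝ (fun p : ℝ × ℝ => g j r p.1 p.2) (y i, y j) ((0:ℝ), (1:ℝ)) := by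
  classical
  rw [pd_decomp_eq f i g hg hrep j r y]
  rw [Finset.sum_eq_single_of_mem j (Finset.mem_erase.mpr ⟨hij, Finset.mem_univ j⟩)]
  · rw [Pi.single_eq_of_ne (Ne.symm hij), Pi.single_eq_same]
  · intro k _ hk
    rw [Pi.single_eq_of_ne (Ne.symm hij), Pi.single_eq_of_ne hk]
    exact (fderiv ℝ (fun p : ℝ × ℝ => g k r p.1 p.2) (y i, y k)).map_zero

lemma pd_decomp_diag (f : ℝ → (Fin m → ℝ) → ℝ) (i : Fin m) (g : Fin m → ℝ → ℝ → ℝ → ℝ)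
    (hg : ∀ k, ContDiff ℝ 1 fun q : ℝ × ℝ × ℝ => g k q.1 q.2.1 q.2.2)
    (hrep : ∀ (r : ℝ) (s : Fin m → ℝ), f r s = ∑ k ∈ Finset.univ.erase i, g k r (s i) (s k))
    (r : ℝ) (y : Fin m → ℝ) :
    pd f i r y = ∑ k ∈ Finset.univ.erase i,
      fderiv ℝ (fun p : ℝ × ℝ => g k r p.1 p.2) (y i, y k) ((1:ℝ), (0:ℝ)) := by
  classical
  rw [pd_decomp_eq f i g hg hrep i r y]
  refine Finset.sum_congr rfl fun k hk => ?_
  rw [Pi.single_eq_same, Pi.single_eq_of_ne (Finset.mem_erase.mp hk).1]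

end Decomp

section KeyM3
variable {m : ℕ}

lemma prod_aff (a b c l : ℝ) (v : ℝ × ℝ) :
    ((a,b) : ℝ × ℝ) + l • (c • v) = (a + l * (c * v.1), b + l * (c * v.2)) := by
  rw [smul_smul]
  cases v with
  | mk v1 v2 =>
    simp [Prod.mk_add_mk, Prod.smul_mk, smul_eq_mul]
    constructor <;> ring

lemma prod_aff1 (a b c : ℝ) (v : ℝ × ℝ) :
    ((a,b) : ℝ × ℝ) + c • v = (a + c * v.1, b + c * v.2) := by
  cases v with
  | mk v1 v2 => simp [Prod.mk_add_mk, Prod.smul_mk, smul_eq_mul]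

lemma key_m3 (f : ℝ → (Fin m → ℝ) → ℝ) (i : Fin m) (g : Fin m → ℝ → ℝ → ℝ → ℝ)
    (hg : ∀ k, ContDiff ℝ 1 fun q : ℝ × ℝ × ℝ => g k q.1 q.2.1 q.2.2)
    (hrep : ∀ (r : ℝ) (s : Fin m → ℝ), f r s = ∑ k ∈ Finset.univ.erase i, g k r (s i) (s k))
    (r : ℝ) (s t : Fin m → ℝ) :
    f r s - f r t = ∑ j, (∫ l in (0:ℝ)..1, pd f j r (pathp i j s t l)) * (s j - t j) := by
  classical
  set G : Fin m → ℝ × ℝ → ℝ := fun k p => g k r p.1 p.2 with hGdef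
  have hGc : ∀ k, ContDiff ℝ 1 (G k) := fun k => G_contDiff g hg k r
  have hDcont : ∀ (k : Fin m) (a b v : ℝ × ℝ),
      Continuous fun l : ℝ => fderiv ℝ (G k) (a + l • b) v := fun k a b v =>
    (((hGc k).continuous_fderiv one_ne_zero).comp (by continuity)).clm_apply continuous_const
  -- diagonal term
  have hPi : ∀ l : ℝ, pathp i i s t l i = t i + l * (s i - t i) := by
    intro l; simp [pathp]
  have hPk : ∀ (l : ℝ) (k : Fin m), k ≠ i → pathp i i s t l k = s k := by
    intro l k hk; simp [pathp, Function.update_apply, hk]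
  have hdiag :
      (∫ l in (0:ℝ)..1, pd f i r (pathp i i s t l)) * (s i - t i)
        = ∑ k ∈ Finset.univ.erase i, (G k (s i, s k) - G k (t i, s k)) := by
    have hinteg : ∀ l : ℝ, pd f i r (pathp i i s t l)
        = ∑ k ∈ Finset.univ.erase i,
            fderiv ℝ (G k) ((t i, s k) + l • ((s i - t i) • ((1:ℝ), (0:ℝ))))
              (((1:ℝ),(0:ℝ)) : ℝ × ℝ) := by
      intro l
      rw [pd_decomp_diag f i g hg hrep r (pathp i i s t l)]
      refine Finset.sum_congr rfl fun k hk => ?_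
      have hki : k ≠ i := (Finset.mem_erase.mp hk).1
      have hpt : ((pathp i i s t l i : ℝ), (pathp i i s t l k : ℝ))
          = (t i, s k) + l • ((s i - t i) • ((1:ℝ), (0:ℝ))) := by
        rw [prod_aff, hPi l, hPk l k hki]
        simp
      rw [hpt]
    rw [intervalIntegral.integral_congr (fun l _ => hinteg l),
      intervalIntegral.integral_finset_sum (fun k _ => (hDcont k _ _ _).intervalIntegrable 0 1),
      Finset.sum_mul]
    refine Finset.sum_congr rfl fun k hk => ?_
    have hftc := ftc_line (G k) (hGc k) ((t i, s k)) ((s i - t i) • ((1:ℝ),(0:ℝ)))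
    have hend : ((t i, s k) : ℝ × ℝ) + (s i - t i) • ((1:ℝ),(0:ℝ)) = (s i, s k) := by
      rw [prod_aff1]; simp
    rw [hend] at hftc
    have hmul : (∫ l in (0:ℝ)..1, fderiv ℝ (G k)
        ((t i, s k) + l • ((s i - t i) • ((1:ℝ),(0:ℝ)))) ((s i - t i) • ((1:ℝ),(0:ℝ))))
        = (s i - t i) * ∫ l in (0:ℝ)..1, fderiv ℝ (G k)
            ((t i, s k) + l • ((s i - t i) • ((1:ℝ),(0:ℝ)))) (((1:ℝ),(0:ℝ)) : ℝ × ℝ) := by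
      rw [← intervalIntegral.integral_const_mul]
      refine intervalIntegral.integral_congr fun l _ => ?_
      rw [_root_.map_smul (fderiv ℝ (G k) ((t i, s k) + l • ((s i - t i) • ((1:ℝ),(0:ℝ))))),
        smul_eq_mul]
    rw [hmul] at hftc
    rw [mul_comm, ← hftc]
  -- off-diagonal terms
  have hoff : ∀ j, j ∈ Finset.univ.erase i →
      (∫ l in (0:ℝ)..1, pd f j r (pathp i j s t l)) * (s j - t j)
        = G j (t i, s j) - G j (t i, t j) := by
    intro j hj
    have hji : j ≠ i := (Finset.mem_erase.mp hj).1
    have hij' : ¬ (i = j) := fun h => hji h.symm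
    have hQi : ∀ l : ℝ, pathp i j s t l i = t i := by
      intro l; simp [pathp, hij', Function.update_apply]
    have hQj : ∀ l : ℝ, pathp i j s t l j = t j + l * (s j - t j) := by
      intro l; simp [pathp, hij']
    have hinteg : ∀ l : ℝ, pd f j r (pathp i j s t l)
        = fderiv ℝ (G j) ((t i, t j) + l • ((s j - t j) • ((0:ℝ), (1:ℝ))))
            (((0:ℝ),(1:ℝ)) : ℝ × ℝ) := by
      intro l
      rw [pd_decomp_offdiag f i g hg hrep j hji r (pathp i j s t l)]
      have hpt : ((pathp i j s t l i : ℝ), (pathp i j s t l j : ℝ))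
          = (t i, t j) + l • ((s j - t j) • ((0:ℝ), (1:ℝ))) := by
        rw [prod_aff, hQi l, hQj l]
        simp
      rw [hpt]
    rw [intervalIntegral.integral_congr (fun l _ => hinteg l)]
    have hftc := ftc_line (G j) (hGc j) ((t i, t j)) ((s j - t j) • ((0:ℝ),(1:ℝ)))
    have hend : ((t i, t j) : ℝ × ℝ) + (s j - t j) • ((0:ℝ),(1:ℝ)) = (t i, s j) := by
      rw [prod_aff1]; simp
    rw [hend] at hftc
    have hmul : (∫ l in (0:ℝ)..1, fderiv ℝ (G j)
        ((t i, t j) + l • ((s j - t j) • ((0:ℝ),(1:ℝ)))) ((s j - t j) • ((0:ℝ),(1:ℝ))))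
        = (s j - t j) * ∫ l in (0:ℝ)..1, fderiv ℝ (G j)
            ((t i, t j) + l • ((s j - t j) • ((0:ℝ),(1:ℝ)))) (((0:ℝ),(1:ℝ)) : ℝ × ℝ) := by
      rw [← intervalIntegral.integral_const_mul]
      refine intervalIntegral.integral_congr fun l _ => ?_
      rw [_root_.map_smul (fderiv ℝ (G j) ((t i, t j) + l • ((s j - t j) • ((0:ℝ),(1:ℝ))))),
        smul_eq_mul]
    rw [hmul] at hftc
    rw [mul_comm, ← hftc]
  calc f r s - f r t
      = ∑ k ∈ Finset.univ.erase i, (G k (s i, s k) - G k (t i, s k))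
        + ∑ k ∈ Finset.univ.erase i, (G k (t i, s k) - G k (t i, t k)) := by
        rw [← Finset.sum_add_distrib, hrep r s, hrep r t, ← Finset.sum_sub_distrib]
        refine Finset.sum_congr rfl fun k hk => ?_
        show G k (s i, s k) - G k (t i, t k) = _
        ring
    _ = (∫ l in (0:ℝ)..1, pd f i r (pathp i i s t l)) * (s i - t i)
        + ∑ j ∈ Finset.univ.erase i,
            (∫ l in (0:ℝ)..1, pd f j r (pathp i j s t l)) * (s j - t j) := by
        rw [hdiag]
        congr 1
        exact (Finset.sum_congr rfl hoff).symm
    _ = ∑ j, (∫ l in (0:ℝ)..1, pd f j r (pathp i j s t l)) * (s j - t j) :=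
        Finset.add_sum_erase _
          (fun j => (∫ l in (0:ℝ)..1, pd f j r (pathp i j s t l)) * (s j - t j))
          (Finset.mem_univ i)

end KeyM3

end AuxLemmas
/-- **The difference between a solution and its reflection satisfies a fully coupled
cooperative linear system.** -/
theorem statement15
    {N m : ℕ} (hN : 2 ≤ N) (hm : 2 ≤ m)
    (Ω : Set (EuclN N)) (hΩ : IsBallOrAnnulus Ω)
    (f : Fin m → ℝ → (Fin m → ℝ) → ℝ)
    (hf : ∀ i, ContDiff ℝ 1 (fun q : ℝ × (Fin m → ℝ) => f i q.1 q.2))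
    (U : Fin m → EuclN N → ℝ)
    (hUreg : ∀ i, ContDiffOn ℝ 2 (U i) (closure Ω))
    (hsol : IsSolution Ω f U)
    (hcoup : ∀ e : EuclN N, ‖e‖ = 1 → FullyCoupledAlong f U (halfDom Ω e))
    (hmono : ∀ i j (r : ℝ) (s t : Fin m → ℝ), (∀ k, s k ≤ t k) →
      pd (f i) j r s ≤ pd (f i) j r t)
    (hdecomp : 3 ≤ m → ∀ i, ∃ g : Fin m → ℝ → ℝ → ℝ → ℝ,
      (∀ k, ContDiff ℝ 1 (fun q : ℝ × ℝ × ℝ => g k q.1 q.2.1 q.2.2)) ∧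
      ∀ (r : ℝ) (s : Fin m → ℝ), f i r s = ∑ k ∈ Finset.univ.erase i, g k r (s i) (s k)) :
    ∀ e : EuclN N, ‖e‖ = 1 →
      ∃ B : Fin m → Fin m → EuclN N → ℝ,
        (∀ i j, ContinuousOn (B i j) Ω) ∧
        (∀ i, ∀ x ∈ Ω,
          -lap (fun y => U i y - U i (reflPt e y)) x
            + ∑ j, B i j x * (U j x - U j (reflPt e x)) = 0) ∧
        (∀ i j, i ≠ j → ∀ x ∈ Ω, B i j x ≤ 0) ∧
        (∀ i, ∀ x ∈ Ω, U i (reflPt e x) ≤ U i x →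
          -pd (f i) i ‖x‖ (fun k => U k x) ≤ B i i x) ∧
        (∀ i j, i ≠ j → ∀ x ∈ Ω, U i (reflPt e x) ≤ U i x → U j (reflPt e x) ≤ U j x →
          -pd (f i) j ‖x‖ (fun k => U k x) ≤ B i j x) ∧
        (∀ i j, ∀ x ∈ Ω, U i (reflPt e x) = U i x → U j (reflPt e x) = U j x →
          B i j x = -pd (f i) j ‖x‖ (fun k => U k x)) ∧
        (∀ I J : Finset (Fin m), I.Nonempty → J.Nonempty → Disjoint I J →
          I ∪ J = Finset.univ →
          ∃ i₀ ∈ I, ∃ j₀ ∈ J, 0 < volume {x ∈ halfDom Ω e | B i₀ j₀ x < 0}) := by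
  classical
  -- the domain is open and norm-characterized
  have hΩo : IsOpen Ω := by
    rcases hΩ with ⟨R, hR, rfl⟩ | ⟨r, R, hr, hrR, rfl⟩
    · exact Metric.isOpen_ball
    · have : {x : EuclN N | r < ‖x‖ ∧ ‖x‖ < R}
          = {x : EuclN N | r < ‖x‖} ∩ {x : EuclN N | ‖x‖ < R} := rfl
      rw [this]
      exact (isOpen_lt continuous_const continuous_norm).inter
        (isOpen_lt continuous_norm continuous_const)
  have hΩnorm : ∀ x ∈ Ω, ∀ y : EuclN N, ‖y‖ = ‖x‖ → y ∈ Ω := by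
    rcases hΩ with ⟨R, hR, rfl⟩ | ⟨r, R, hr, hrR, rfl⟩
    · intro x hx y hy
      rw [mem_ball_zero_iff] at *
      rw [hy]; exact hx
    · intro x hx y hy
      exact ⟨by rw [hy]; exact hx.1, by rw [hy]; exact hx.2⟩
  intro e he
  have hσnorm : ∀ x : EuclN N, ‖reflPt e x‖ = ‖x‖ := norm_reflPt e he
  have hΩr : ∀ x ∈ Ω, reflPt e x ∈ Ω := fun x hx => hΩnorm x hx _ (hσnorm x)
  have hUΩ : ∀ k, ContDiffOn ℝ 2 (U k) Ω := fun k => (hUreg k).mono subset_closure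
  -- cooperativity at every point of Ω, for arbitrary values
  have hpdr : ∀ i j, i ≠ j → ∀ x ∈ Ω, ∀ s : Fin m → ℝ, 0 ≤ pd (f i) j ‖x‖ s := by
    have hpos : ∀ i j, i ≠ j → ∀ y : EuclN N, y ∈ Ω → y ≠ 0 → ∀ s : Fin m → ℝ,
        0 ≤ pd (f i) j ‖y‖ s := by
      intro i j hij y hy hy0 s
      set e' : EuclN N := ‖y‖⁻¹ • y with he'def
      have hny : (0:ℝ) < ‖y‖ := norm_pos_iff.mpr hy0
      have he' : ‖e'‖ = 1 := by
        rw [he'def, norm_smul, norm_inv, norm_norm, inv_mul_cancel₀ (ne_of_gt hny)]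
      have hyhalf : y ∈ halfDom Ω e' := by
        refine ⟨hy, ?_⟩
        rw [he'def, real_inner_smul_right, real_inner_self_eq_norm_mul_norm]
        positivity
      exact (hcoup e' he').1 i j hij y hyhalf s
    intro i j hij x hx s
    by_cases hx0 : x = (0 : EuclN N)
    · subst hx0
      obtain ⟨ε, hε, hball⟩ := Metric.isOpen_iff.mp hΩo 0 hx
      have hN0 : (0:ℕ) < N := by omega
      set v : EuclN N := EuclideanSpace.single (⟨0, hN0⟩ : Fin N) (1:ℝ) with hvdef
      have hv : ‖v‖ = 1 := by rw [hvdef, EuclideanSpace.norm_single, norm_one]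
      set φ : ℝ → ℝ := fun ρ => pd (f i) j ρ s with hφdef
      have hφc : Continuous φ := by
        have : φ = (fun q : ℝ × (Fin m → ℝ) => pd (f i) j q.1 q.2)
            ∘ (fun ρ : ℝ => (ρ, s)) := rfl
        rw [this]
        exact (pd_cont (f i) (hf i) j).comp (continuous_id.prodMk continuous_const)
      have hev : ∀ᶠ ρ in nhdsWithin (0:ℝ) (Set.Ioi 0), 0 ≤ φ ρ := by
        filter_upwards [Ioo_mem_nhdsGT_of_mem (Set.mem_Ico.mpr ⟨le_rfl, hε⟩)] with ρ hρ
        have hyn : ‖ρ • v‖ = ρ := by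
          rw [norm_smul, hv, mul_one, Real.norm_eq_abs, abs_of_pos hρ.1]
        have hymem : ρ • v ∈ Ω := by
          apply hball
          rw [mem_ball_zero_iff, hyn]
          exact hρ.2
        have hy0 : ρ • v ≠ 0 := by
          intro hcon
          rw [hcon, norm_zero] at hyn
          exact absurd hyn.symm (ne_of_gt hρ.1)
        have := hpos i j hij (ρ • v) hymem hy0 s
        rwa [hyn] at this
      have htend : Filter.Tendsto φ (nhdsWithin (0:ℝ) (Set.Ioi 0)) (nhds (φ 0)) :=
        (hφc.continuousAt).tendsto.mono_left nhdsWithin_le_nhds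
      have : 0 ≤ φ 0 := ge_of_tendsto htend hev
      simpa [hφdef] using this
    · exact hpos i j hij x hx hx0 s
  -- abbreviations
  set S : EuclN N → Fin m → ℝ := fun x k => U k x with hSdef
  set T : EuclN N → Fin m → ℝ := fun x k => U k (reflPt e x) with hTdef
  set c : Fin m → Fin m → EuclN N → ℝ := fun i j x =>
    ∫ l in (0:ℝ)..1, pd (f i) j ‖x‖ (pathp i j (S x) (T x) l) with hcdef
  -- continuity of the integrand in `l`
  have hIcont : ∀ (i j : Fin m) (x : EuclN N),
      Continuous fun l : ℝ => pd (f i) j ‖x‖ (pathp i j (S x) (T x) l) :=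
    fun i j x => (pd_cont (f i) (hf i) j).comp
      (continuous_const.prodMk (pathp_continuous i j (S x) (T x)))
  -- the fundamental telescoping identity
  have key : ∀ (i : Fin m) (x : EuclN N),
      f i ‖x‖ (S x) - f i ‖x‖ (T x) = ∑ j, c i j x * (S x j - T x j) := by
    intro i x
    by_cases h3 : 3 ≤ m
    · obtain ⟨g, hg, hrep⟩ := hdecomp h3 i
      exact key_m3 (f i) i g hg hrep ‖x‖ (S x) (T x)
    · exact key_m2 hm (by omega) (f i) (hf i) i ‖x‖ (S x) (T x)
  -- pd only depends on the coordinates i and j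
  have pdcongr : ∀ i j : Fin m, i ≠ j → ∀ (r : ℝ) (y y' : Fin m → ℝ),
      y i = y' i → y j = y' j → pd (f i) j r y = pd (f i) j r y' := by
    intro i j hij r y y' hyi hyj
    by_cases h3 : 3 ≤ m
    · obtain ⟨g, hg, hrep⟩ := hdecomp h3 i
      rw [pd_decomp_offdiag (f i) i g hg hrep j (Ne.symm hij) r y,
        pd_decomp_offdiag (f i) i g hg hrep j (Ne.symm hij) r y', hyi, hyj]
    · have hyy : y = y' := by
        funext k
        have hki : k = i ∨ k = j := by
          by_contra hcon
          push_neg at hcon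
          have h1 : k.val ≠ i.val := fun h => hcon.1 (Fin.val_injective h)
          have h2 : k.val ≠ j.val := fun h => hcon.2 (Fin.val_injective h)
          have h3' : i.val ≠ j.val := fun h => hij (Fin.val_injective h)
          have := k.isLt; have := i.isLt; have := j.isLt
          omega
        rcases hki with h | h
        · rw [h, hyi]
        · rw [h, hyj]
      rw [hyy]
  refine ⟨fun i j x => -(c i j x), ?_, ?_, ?_, ?_, ?_, ?_, ?_⟩
  · -- continuity
    intro i j
    -- joint continuity of the integrand
    have hS : ∀ k, ContinuousOn (fun p : EuclN N × ℝ => S p.1 k)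
        (Ω ×ˢ (Set.univ : Set ℝ)) := by
      intro k
      exact ((hUΩ k).continuousOn).comp continuous_fst.continuousOn
        (fun p hp => hp.1)
    have hT : ∀ k, ContinuousOn (fun p : EuclN N × ℝ => T p.1 k)
        (Ω ×ˢ (Set.univ : Set ℝ)) := by
      intro k
      exact ((hUΩ k).continuousOn).comp
        ((reflPt_continuous e).comp continuous_fst).continuousOn
        (fun p hp => hΩr p.1 hp.1)
    have hJ : ContinuousOn
        (fun p : EuclN N × ℝ => pd (f i) j ‖p.1‖ (pathp i j (S p.1) (T p.1) p.2))
        (Ω ×ˢ (Set.univ : Set ℝ)) := by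
      have hpform : (fun p : EuclN N × ℝ => pd (f i) j ‖p.1‖ (pathp i j (S p.1) (T p.1) p.2))
          = (fun q : ℝ × (Fin m → ℝ) => pd (f i) j q.1 q.2)
            ∘ (fun p : EuclN N × ℝ => (‖p.1‖, pathp i j (S p.1) (T p.1) p.2)) := rfl
      rw [hpform]
      apply (pd_cont (f i) (hf i) j).comp_continuousOn
      apply ContinuousOn.prodMk (continuous_norm.comp continuous_fst).continuousOn
      apply continuousOn_pi.mpr
      intro k
      simp only [pathp]
      split_ifs with hd
      · simp only [Function.update_apply]
        split_ifs with hk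
        · exact (hT i).add (continuous_snd.continuousOn.mul ((hS i).sub (hT i)))
        · exact hS k
      · simp only [Function.update_apply]
        split_ifs with hk1 hk2
        · exact (hT j).add (continuous_snd.continuousOn.mul ((hS j).sub (hT j)))
        · exact hT i
        · exact hS k
    intro x₀ hx₀
    apply ContinuousAt.continuousWithinAt
    apply ContinuousAt.neg
    obtain ⟨ρ, hρ, hball⟩ := Metric.isOpen_iff.mp hΩo x₀ hx₀
    have hKsub : Metric.closedBall x₀ (ρ/2) ⊆ Ω :=
      (Metric.closedBall_subset_ball (half_lt_self hρ)).trans hball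
    have hKc : IsCompact ((Metric.closedBall x₀ (ρ/2)) ×ˢ (Set.Icc (0:ℝ) 1)) :=
      (isCompact_closedBall _ _).prod isCompact_Icc
    obtain ⟨M, hM⟩ := hKc.exists_bound_of_continuousOn
      (hJ.mono (Set.prod_mono hKsub (Set.subset_univ _)))
    rw [hcdef]
    apply intervalIntegral.continuousAt_of_dominated_interval
      (bound := fun _ : ℝ => M) (μ := volume)
    · filter_upwards [hΩo.mem_nhds hx₀] with x hx
      have hcl : Continuous fun l : ℝ => pd (f i) j ‖x‖ (pathp i j (S x) (T x) l) :=
        hIcont i j x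
      exact hcl.aestronglyMeasurable
    · filter_upwards [Metric.closedBall_mem_nhds x₀ (half_pos hρ)] with x hx
      apply MeasureTheory.ae_of_all
      intro l hl
      have hl' : l ∈ Set.Icc (0:ℝ) 1 := by
        rw [Set.uIoc_of_le (zero_le_one' ℝ)] at hl
        exact ⟨hl.1.le, hl.2⟩
      exact hM ((x, l)) ⟨hx, hl'⟩
    · exact intervalIntegrable_const
    · apply MeasureTheory.ae_of_all
      intro l _
      have hmem : (x₀, l) ∈ Ω ×ˢ (Set.univ : Set ℝ) := ⟨hx₀, trivial⟩
      have hJat : ContinuousAt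
          (fun p : EuclN N × ℝ => pd (f i) j ‖p.1‖ (pathp i j (S p.1) (T p.1) p.2))
          (x₀, l) :=
        hJ.continuousAt ((hΩo.prod isOpen_univ).mem_nhds hmem)
      have hinner : ContinuousAt (fun x : EuclN N => ((x, l) : EuclN N × ℝ)) x₀ :=
        (continuous_id.prodMk continuous_const).continuousAt
      exact ContinuousAt.comp (f := fun x : EuclN N => ((x, l) : EuclN N × ℝ)) hJat hinner
  · -- the PDE
    intro i x hx
    have hlap := lap_refl_sub e he Ω hΩo hΩr (U i) (hUΩ i) hx
    have h1 := hsol.1 i x hx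
    have h2 := hsol.1 i (reflPt e x) (hΩr x hx)
    rw [hσnorm x] at h2
    have hkey := key i x
    have hsum : (∑ j, -(c i j x) * (U j x - U j (reflPt e x)))
        = -(∑ j, c i j x * (S x j - T x j)) := by
      rw [← Finset.sum_neg_distrib]
      exact Finset.sum_congr rfl fun j _ => by rw [neg_mul]
    rw [hlap, hsum, ← hkey]
    have hfx : f i ‖x‖ (fun k => U k x) = f i ‖x‖ (S x) := rfl
    have hfs : f i ‖x‖ (fun k => U k (reflPt e x)) = f i ‖x‖ (T x) := rfl
    rw [hfx] at h1
    rw [hfs] at h2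
    linarith
  · -- off-diagonal sign
    intro i j hij x hx
    have h0 : 0 ≤ c i j x := by
      rw [hcdef]
      exact intervalIntegral.integral_nonneg zero_le_one
        (fun l _ => hpdr i j hij x hx _)
    show -(c i j x) ≤ 0
    linarith
  · -- diagonal lower bound
    intro i x hx hle
    have hmono' : ∀ l ∈ Set.Icc (0:ℝ) 1,
        pd (f i) i ‖x‖ (pathp i i (S x) (T x) l) ≤ pd (f i) i ‖x‖ (S x) := by
      intro l hl
      apply hmono
      intro k
      unfold pathp
      rw [if_pos rfl, Function.update_apply]
      by_cases hk : k = i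
      · rw [if_pos hk]
        subst hk
        have hTS : T x k ≤ S x k := hle
        nlinarith [hl.1, hl.2]
      · rw [if_neg hk]
    have hcle : c i i x ≤ pd (f i) i ‖x‖ (S x) := by
      rw [hcdef]
      have := intervalIntegral.integral_mono_on zero_le_one
        ((hIcont i i x).intervalIntegrable 0 1)
        (intervalIntegrable_const (μ := volume) (c := pd (f i) i ‖x‖ (S x)))
        hmono'
      simpa using this
    have hgoal : -pd (f i) i ‖x‖ (S x) ≤ -(c i i x) := neg_le_neg hcle
    exact hgoal
  · -- off-diagonal lower bound
    intro i j hij x hx hlei hlej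
    have hmono' : ∀ l ∈ Set.Icc (0:ℝ) 1,
        pd (f i) j ‖x‖ (pathp i j (S x) (T x) l) ≤ pd (f i) j ‖x‖ (S x) := by
      intro l hl
      apply hmono
      intro k
      unfold pathp
      rw [if_neg hij, Function.update_apply]
      by_cases hk1 : k = j
      · rw [if_pos hk1]
        subst hk1
        have hTS : T x k ≤ S x k := hlej
        nlinarith [hl.1, hl.2]
      · rw [if_neg hk1, Function.update_apply]
        by_cases hk2 : k = i
        · rw [if_pos hk2]
          subst hk2
          exact hlei
        · rw [if_neg hk2]
    have hcle : c i j x ≤ pd (f i) j ‖x‖ (S x) := by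
      rw [hcdef]
      have := intervalIntegral.integral_mono_on zero_le_one
        ((hIcont i j x).intervalIntegrable 0 1)
        (intervalIntegrable_const (μ := volume) (c := pd (f i) j ‖x‖ (S x)))
        hmono'
      simpa using this
    exact neg_le_neg hcle
  · -- equality case
    intro i j x hx hEi hEj
    have hpath : ∀ l : ℝ, pathp i j (S x) (T x) l = S x := by
      intro l
      funext k
      simp only [pathp]
      split_ifs with hd
      · subst hd
        rw [Function.update_apply]
        split_ifs with hk
        · subst hk
          have : T x k = S x k := hEi
          rw [this]; ring
        · rfl
      · rw [Function.update_apply, Function.update_apply]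
        split_ifs with hk1 hk2
        · subst hk1
          have : T x k = S x k := hEj
          rw [this]; ring
        · subst hk2
          exact hEi
        · rfl
    have : c i j x = pd (f i) j ‖x‖ (S x) := by
      rw [hcdef]
      simp only []
      rw [intervalIntegral.integral_congr (fun l _ => by rw [hpath l])]
      simp
    show -(c i j x) = -pd (f i) j ‖x‖ (fun k => U k x)
    rw [this]
  · -- full coupling
    intro I J hI hJ hIJ hU
    have hne : ‖(-e : EuclN N)‖ = 1 := by rw [norm_neg]; exact he
    obtain ⟨i0, hi0, j0, hj0, hpos⟩ := (hcoup (-e) hne).2 I J hI hJ hIJ hU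
    have hij0 : i0 ≠ j0 := by
      intro h
      exact (Finset.disjoint_left.mp hIJ hi0) (h ▸ hj0)
    set g : EuclN N → ℝ := fun x => pd (f i0) j0 ‖x‖ (S x) with hgdef
    have hgcont : ContinuousOn g Ω := by
      have : g = (fun q : ℝ × (Fin m → ℝ) => pd (f i0) j0 q.1 q.2)
          ∘ (fun x : EuclN N => (‖x‖, S x)) := rfl
      rw [this]
      apply (pd_cont (f i0) (hf i0) j0).comp_continuousOn
      apply ContinuousOn.prodMk continuous_norm.continuousOn
      exact continuousOn_pi.mpr fun k => ((hUΩ k).continuousOn)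
    set A : Set (EuclN N) := {x ∈ halfDom Ω (-e) | 0 < g x} with hAdef
    have hhalfopen : ∀ e' : EuclN N, IsOpen (halfDom Ω e') := by
      intro e'
      have : halfDom Ω e' = Ω ∩ {x : EuclN N | 0 < ⟪x, e'⟫} := rfl
      rw [this]
      exact hΩo.inter (isOpen_lt continuous_const (continuous_id.inner continuous_const))
    have hAopen : IsOpen A := by
      have : A = halfDom Ω (-e) ∩ (g ⁻¹' Set.Ioi 0) := rfl
      rw [this]
      exact (hgcont.mono fun x hx => hx.1).isOpen_inter_preimage
        (hhalfopen (-e)) isOpen_Ioi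
    have hApre : reflPt e ⁻¹' A ⊆ {x ∈ halfDom Ω e | -(c i0 j0 x) < 0} := by
      intro x hxA
      obtain ⟨⟨hσΩ, hσe⟩, hσpd⟩ := hxA
      have hxΩ : x ∈ Ω := by
        have := hΩr (reflPt e x) hσΩ
        rwa [reflPt_invol e he x] at this
      have hxe : 0 < ⟪x, e⟫ := by
        rw [inner_neg_right, inner_reflPt_e e he x, neg_neg] at hσe
        exact hσe
      refine ⟨⟨hxΩ, hxe⟩, ?_⟩
      have hc0 : 0 < c i0 j0 x := by
        rw [hcdef]
        apply ii_pos _ (hIcont i0 j0 x) (fun l => hpdr i0 j0 hij0 x hxΩ _)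
        have hp0 : pd (f i0) j0 ‖x‖ (pathp i0 j0 (S x) (T x) 0) = pd (f i0) j0 ‖x‖ (T x) := by
          apply pdcongr i0 j0 hij0
          · simp [pathp, if_neg hij0, Function.update_apply, hij0, Ne.symm hij0]
          · simp [pathp, if_neg hij0, Function.update_apply]
        rw [hp0]
        have hTx : T x = S (reflPt e x) := rfl
        rw [hTx, ← hσnorm x]
        exact hσpd
      linarith
    refine ⟨i0, hi0, j0, hj0, ?_⟩
    have hAmeas : MeasurableSet A := hAopen.measurableSet
    have hrefl_eq : ⇑(reflLIE e he) = reflPt e := funext (reflLIE_apply e he)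
    have hvol : volume (reflPt e ⁻¹' A) = volume A := by
      rw [← hrefl_eq]
      exact ((reflLIE e he).measurePreserving).measure_preimage hAmeas.nullMeasurableSet
    calc (0:ℝ≥0∞) < volume A := hpos
      _ = volume (reflPt e ⁻¹' A) := hvol.symm
      _ ≤ volume {x ∈ halfDom Ω e | -(c i0 j0 x) < 0} := measure_mono hApre
end
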